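/- arXiv:2504.05114 — 6 statements merged into one kernel-verified Lean document; each statement's English description precedes it below -/
import Mathlib

section
/- Let WN = (P, T, F) be a safe and sound workflow net with at least one transition (equivalently, with ▶ ≠ ■). Then every run of WN, viewed as a finite trace over the alphabet T, is a model trace of the Declare specification DS(WN), i.e., it satisfies every constraint of DS(WN). (Theorem 1, direction (i).) -/
open Classical

/-- The edge relation of the underlying bipartite graph of a Petri net:
places and transitions are nodes, flow pairs are directed edges. -/
def NetEdge {P T : Type} (Fpt : P → T → Prop) (Ftp : T → P → Prop) :
    (P ⊕ T) → (P ⊕ T) → Prop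
  | Sum.inl p, Sum.inr t => Fpt p t
  | Sum.inr t, Sum.inl p => Ftp t p
  | _, _ => False

/-- A workflow net: a Petri net with flow relation split into its
place-to-transition part `Fpt` and transition-to-place part `Ftp`,
a unique initial place `source` (empty preset), a unique output place `sink`
(empty postset), and every node on a directed path from `source` to `sink`. -/
structure WorkflowNet (P T : Type) where
  Fpt : P → T → Prop
  Ftp : T → P → Prop
  source : P
  sink : P
  source_pre_empty : ∀ t, ¬ Ftp t source
  sink_post_empty : ∀ t, ¬ Fpt sink t
  source_unique : ∀ p, (∀ t, ¬ Ftp t p) → p = source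
  sink_unique : ∀ p, (∀ t, ¬ Fpt p t) → p = sink
  on_path : ∀ x : P ⊕ T,
    Relation.ReflTransGen (NetEdge Fpt Ftp) (Sum.inl source) x ∧
    Relation.ReflTransGen (NetEdge Fpt Ftp) x (Sum.inl sink)

variable {P T : Type}

/-- The preset `•p` of a place: transitions `t` with `(t, p) ∈ F`. -/
def preset (N : WorkflowNet P T) (p : P) : Set T := {t | N.Ftp t p}

/-- The postset `p•` of a place: transitions `t` with `(p, t) ∈ F`. -/
def postset (N : WorkflowNet P T) (p : P) : Set T := {t | N.Fpt p t}

/-- The initial marking: one token on the initial place, none elsewhere. -/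
noncomputable def initialMarking (N : WorkflowNet P T) : P → ℕ :=
  fun p => if p = N.source then 1 else 0

/-- The final marking: one token on the output place, none elsewhere. -/
noncomputable def finalMarking (N : WorkflowNet P T) : P → ℕ :=
  fun p => if p = N.sink then 1 else 0

/-- A marking enables `t` iff every input place of `t` holds a token. -/
def Enables (N : WorkflowNet P T) (M : P → ℕ) (t : T) : Prop :=
  ∀ p, N.Fpt p t → 0 < M p

/-- `Fires N M t M'`: `t` is enabled at `M` and firing it yields `M'`. -/
def Fires (N : WorkflowNet P T) (M : P → ℕ) (t : T) (M' : P → ℕ) : Prop :=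
  Enables N M t ∧ ∀ p,
    (N.Fpt p t ∧ ¬ N.Ftp t p → M' p = M p - 1) ∧
    (N.Ftp t p ∧ ¬ N.Fpt p t → M' p = M p + 1) ∧
    (¬ (N.Fpt p t ∧ ¬ N.Ftp t p) → ¬ (N.Ftp t p ∧ ¬ N.Fpt p t) → M' p = M p)

/-- Successive firing of a finite sequence of transitions from a marking. -/
inductive FiresSeq (N : WorkflowNet P T) : (P → ℕ) → List T → (P → ℕ) → Prop
  | nil (M : P → ℕ) : FiresSeq N M [] M
  | cons {M M' M'' : P → ℕ} {t : T} {σ : List T} :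
      Fires N M t M' → FiresSeq N M' σ M'' → FiresSeq N M (t :: σ) M''

/-- A firing sequence: fireable successively from the initial marking. -/
def FiringSequence (N : WorkflowNet P T) (σ : List T) : Prop :=
  ∃ M, FiresSeq N (initialMarking N) σ M

/-- A reachable marking. -/
def Reachable (N : WorkflowNet P T) (M : P → ℕ) : Prop :=
  ∃ σ, FiresSeq N (initialMarking N) σ M

/-- A run: a firing sequence leading from the initial to the final marking. -/
def IsRun (N : WorkflowNet P T) (σ : List T) : Prop :=
  FiresSeq N (initialMarking N) σ (finalMarking N)

/-- Safety: every reachable marking puts at most one token in each place. -/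
def Safe (N : WorkflowNet P T) : Prop :=
  ∀ M, Reachable N M → ∀ p, M p ≤ 1

/-- Soundness: option to complete, proper completion, no dead transitions. -/
def Sound (N : WorkflowNet P T) : Prop :=
  (∀ M, Reachable N M → ∃ σ, FiresSeq N M σ (finalMarking N)) ∧
  (∀ M, Reachable N M → 0 < M N.sink → M = finalMarking N) ∧
  (∀ t : T, ∃ M, Reachable N M ∧ Enables N M t)

/-- `AtMostOne(A)`: at most one position of the trace carries a symbol of `A`. -/
def AtMostOneC {α : Type} (A : Set α) (σ : List α) : Prop :=
  ∀ i j : Fin σ.length, σ.get i ∈ A → σ.get j ∈ A → i = j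

/-- `End(A)`: the trace is nonempty and its last symbol is in `A`. -/
def EndC {α : Type} (A : Set α) (σ : List α) : Prop :=
  ∃ a ∈ A, σ.getLast? = some a

/-- `AlternatePrecedence(B, A)`: every `A`-position is preceded by a `B`-position
with no `A`-position strictly in between. -/
def AltPrecC {α : Type} (B A : Set α) (σ : List α) : Prop :=
  ∀ i : Fin σ.length, σ.get i ∈ A →
    ∃ j : Fin σ.length, j < i ∧ σ.get j ∈ B ∧
      ∀ k : Fin σ.length, j < k → k < i → σ.get k ∉ A

/-- The Declare constraint that Algorithm 1 generates from place `p`: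
`AlternatePrecedence(•p, p•)` if both `•p` and `p•` are nonempty,
`AtMostOne(p•)` if `•p = ∅`, and `End(•p)` if `p• = ∅`. -/
def PlaceConstraint (N : WorkflowNet P T) (p : P) (σ : List T) : Prop :=
  if preset N p = ∅ then AtMostOneC (postset N p) σ
  else if postset N p = ∅ then EndC (preset N p) σ
  else AltPrecC (preset N p) (postset N p) σ

/-- A model trace of the specification `DS(WN)`: it satisfies the
constraint generated from every place of the net. -/
def ModelTrace (N : WorkflowNet P T) (σ : List T) : Prop :=
  ∀ p : P, PlaceConstraint N p σ

/-! ### Auxiliary infrastructure -/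

/-- Deterministic firing function. -/
noncomputable def fireStep (N : WorkflowNet P T) (M : P → ℕ) (t : T) : P → ℕ :=
  fun p => if N.Fpt p t ∧ ¬ N.Ftp t p then M p - 1
    else if N.Ftp t p ∧ ¬ N.Fpt p t then M p + 1 else M p

lemma fires_eq {N : WorkflowNet P T} {M : P → ℕ} {t : T} {M' : P → ℕ}
    (h : Fires N M t M') : M' = fireStep N M t := by
  funext p
  obtain ⟨-, h2⟩ := h
  obtain ⟨ha, hb, hc⟩ := h2 p
  unfold fireStep
  split_ifs with h1 h2
  · exact ha h1
  · exact hb h2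
  · exact hc h1 h2

/-- Marking after `k` steps of `σ` starting from `M0`. -/
noncomputable def markAt (N : WorkflowNet P T) (M0 : P → ℕ) (σ : List T) (k : ℕ) : P → ℕ :=
  (σ.take k).foldl (fireStep N) M0

lemma markAt_zero (N : WorkflowNet P T) (M0 : P → ℕ) (σ : List T) :
    markAt N M0 σ 0 = M0 := rfl

lemma markAt_cons (N : WorkflowNet P T) (M0 : P → ℕ) (t : T) (σ : List T) (k : ℕ) :
    markAt N M0 (t :: σ) (k + 1) = markAt N (fireStep N M0 t) σ k := by
  simp [markAt]

lemma firesSeq_step {N : WorkflowNet P T} {M0 M : P → ℕ} {σ : List T}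
    (h : FiresSeq N M0 σ M) :
    ∀ k (hk : k < σ.length),
      Fires N (markAt N M0 σ k) (σ.get ⟨k, hk⟩) (markAt N M0 σ (k + 1)) := by
  induction h with
  | nil => intro k hk; simp at hk
  | @cons M M' M'' t σ hf hs ih =>
    intro k hk
    cases k with
    | zero =>
      have he := fires_eq hf
      have : markAt N M (t :: σ) 1 = fireStep N M t := by
        rw [markAt_cons]; rfl
      rw [this, ← he]
      exact hf
    | succ k =>
      have hk' : k < σ.length := by simpa using hk
      have := ih k hk'
      rw [markAt_cons, markAt_cons, ← fires_eq hf]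
      simpa using this

lemma firesSeq_take {N : WorkflowNet P T} {M0 M : P → ℕ} {σ : List T}
    (h : FiresSeq N M0 σ M) :
    ∀ k, FiresSeq N M0 (σ.take k) (markAt N M0 σ k) := by
  induction h with
  | nil => intro k; simpa [markAt] using FiresSeq.nil _
  | @cons M M' M'' t σ hf hs ih =>
    intro k
    cases k with
    | zero => simpa [markAt] using FiresSeq.nil M
    | succ k =>
      rw [markAt_cons, ← fires_eq hf]
      exact FiresSeq.cons hf (ih k)

lemma firesSeq_last {N : WorkflowNet P T} {M0 M : P → ℕ} {σ : List T}
    (h : FiresSeq N M0 σ M) : markAt N M0 σ σ.length = M := by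
  induction h with
  | nil => rfl
  | @cons M M' M'' t σ hf hs ih =>
    show markAt N M (t :: σ) (σ.length + 1) = M''
    rw [markAt_cons, ← fires_eq hf]
    exact ih

/-- If `p` has no token at time `a` and no transition in `•p` fires in `[a, b)`,
then `p` has no token at time `b`. -/
lemma zero_persist {N : WorkflowNet P T} {M0 M : P → ℕ} {σ : List T}
    (h : FiresSeq N M0 σ M) (p : P) :
    ∀ b, b ≤ σ.length → ∀ a, a ≤ b → markAt N M0 σ a p = 0 →
      (∀ k (hk : k < σ.length), a ≤ k → k < b → ¬ N.Ftp (σ.get ⟨k, hk⟩) p) →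
      markAt N M0 σ b p = 0 := by
  intro b
  induction b with
  | zero =>
    intro _ a ha h0 _
    have : a = 0 := Nat.le_zero.mp ha
    rwa [this] at h0
  | succ b ih =>
    intro hb a ha h0 hno
    rcases Nat.eq_or_lt_of_le ha with heq | hlt
    · rwa [← heq]
    · have hab : a ≤ b := Nat.lt_succ_iff.mp hlt
      have hblen : b < σ.length := hb
      have hbz : markAt N M0 σ b p = 0 :=
        ih (le_of_lt hblen) a hab h0
          (fun k hk hak hkb => hno k hk hak (Nat.lt_succ_of_lt hkb))
      have hfire := firesSeq_step h b hblen
      set t := σ.get ⟨b, hblen⟩ with ht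
      have hnoB : ¬ N.Ftp t p := hno b hblen hab (Nat.lt_succ_self b)
      have hnoA : ¬ N.Fpt p t := by
        intro hFpt
        have := hfire.1 p hFpt
        omega
      obtain ⟨-, -, hc⟩ := hfire.2 p
      have := hc (fun hx => hnoA hx.1) (fun hx => hnoB hx.1)
      rw [this, hbz]

/-- If no transition in `•p` ever fires in `[a, b)`, the token count at `p`
does not increase from `a` to `b`. -/
lemma mono_noinc {N : WorkflowNet P T} {M0 M : P → ℕ} {σ : List T}
    (h : FiresSeq N M0 σ M) (p : P) (hnp : ∀ t, ¬ N.Ftp t p) :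
    ∀ b, b ≤ σ.length → ∀ a, a ≤ b →
      markAt N M0 σ b p ≤ markAt N M0 σ a p := by
  intro b
  induction b with
  | zero =>
    intro _ a ha
    have : a = 0 := Nat.le_zero.mp ha
    rw [this]
  | succ b ih =>
    intro hb a ha
    rcases Nat.eq_or_lt_of_le ha with heq | hlt
    · rw [← heq]
    · have hab : a ≤ b := Nat.lt_succ_iff.mp hlt
      have hblen : b < σ.length := hb
      have hfire := firesSeq_step h b hblen
      set t := σ.get ⟨b, hblen⟩ with ht
      have hstep : markAt N M0 σ (b + 1) p ≤ markAt N M0 σ b p := by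
        obtain ⟨ha', hb', hc'⟩ := hfire.2 p
        by_cases hx : N.Fpt p t
        · rw [ha' ⟨hx, hnp t⟩]; omega
        · rw [hc' (fun hy => hx hy.1) (fun hy => hnp t hy.1)]
      exact le_trans hstep (ih (le_of_lt hblen) a hab)

/-- Theorem 1, direction (i): every run of a safe and sound workflow net
(with `▶ ≠ ■`) is a model trace of the synthesized Declare specification. -/
theorem run_is_model_trace {P T : Type} [Finite P] [Finite T]
    (N : WorkflowNet P T) (hsafe : Safe N) (hsound : Sound N)
    (hne : N.source ≠ N.sink) :
    ∀ σ : List T, IsRun N σ → ModelTrace N σ := by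
  classical
  intro σ hrun p
  have hreach : ∀ k, Reachable N (markAt N (initialMarking N) σ k) :=
    fun k => ⟨σ.take k, firesSeq_take hrun k⟩
  unfold PlaceConstraint
  split_ifs with h1 h2
  · -- preset empty : p = source, AtMostOne
    have hnp : ∀ t, ¬ N.Ftp t p := by
      intro t ht
      have : t ∈ preset N p := ht
      rw [h1] at this
      exact this
    have hps : p = N.source := N.source_unique p hnp
    have key : ∀ i j : Fin σ.length, i < j →
        σ.get i ∈ postset N p → σ.get j ∈ postset N p → False := by
      intro i j hij hi hj
      have hfi := firesSeq_step hrun i.1 i.2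
      have hfj := firesSeq_step hrun j.1 j.2
      have hEi : 0 < markAt N (initialMarking N) σ i.1 p := hfi.1 p hi
      have hEj : 0 < markAt N (initialMarking N) σ j.1 p := hfj.1 p hj
      -- marking at 0 is 1
      have h0 : markAt N (initialMarking N) σ 0 p = 1 := by
        simp [markAt, initialMarking, hps]
      have hmono := mono_noinc hrun p hnp
      have hile : markAt N (initialMarking N) σ i.1 p ≤ 1 := by
        have := hmono i.1 (le_of_lt i.2) 0 (Nat.zero_le _)
        rwa [h0] at this
      have hdec : markAt N (initialMarking N) σ (i.1 + 1) p
          = markAt N (initialMarking N) σ i.1 p - 1 :=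
        (hfi.2 p).1 ⟨hi, hnp _⟩
      have : markAt N (initialMarking N) σ (i.1 + 1) p = 0 := by omega
      have hle := hmono j.1 (le_of_lt j.2) (i.1 + 1) hij
      omega
    intro i j hi hj
    rcases lt_trichotomy i j with h | h | h
    · exact absurd (key i j h hi hj) not_false
    · exact h
    · exact absurd (key j i h hj hi) not_false
  · -- postset empty : p = sink, End
    have hnq : ∀ t, ¬ N.Fpt p t := by
      intro t ht
      have : t ∈ postset N p := ht
      rw [h2] at this
      exact this
    have hps : p = N.sink := N.sink_unique p hnq
    -- σ nonempty
    have hσne : σ ≠ [] := by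
      intro hnil
      subst hnil
      have hrun' : FiresSeq N (initialMarking N) [] (finalMarking N) := hrun
      have heqm : initialMarking N = finalMarking N := by
        generalize hA : initialMarking N = A at hrun'
        generalize hB : finalMarking N = B at hrun'
        cases hrun'; rfl
      have := congrFun heqm N.sink
      simp [initialMarking, finalMarking, hne, Ne.symm hne] at this
    have hlen : 0 < σ.length := List.length_pos_iff.mpr hσne
    set n := σ.length with hn
    have hn1 : n - 1 < n := by omega
    set t := σ.get ⟨n - 1, hn1⟩ with ht
    have hfin : markAt N (initialMarking N) σ n p = 1 := by
      rw [firesSeq_last hrun]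
      simp [finalMarking, hps]
    have hfire := firesSeq_step hrun (n - 1) hn1
    have hsucc : n - 1 + 1 = n := by omega
    rw [hsucc] at hfire
    -- t has some input place
    obtain ⟨q, hq⟩ : ∃ q, N.Fpt q t := by
      have hpath := (N.on_path (Sum.inr t)).1
      rcases (Relation.ReflTransGen.cases_tail hpath) with heq | ⟨c, _, hc⟩
      · exact absurd heq (by simp)
      · cases c with
        | inl q => exact ⟨q, hc⟩
        | inr t' => exact absurd hc (by simp [NetEdge])
    have htB : N.Ftp t p := by
      by_contra hFt
      have hFp : ¬ N.Fpt p t := hnq t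
      obtain ⟨-, -, hc⟩ := hfire.2 p
      have heqm := hc (fun hx => hFp hx.1) (fun hx => hFt hx.1)
      have hprev : 0 < markAt N (initialMarking N) σ (n - 1) p := by
        rw [← heqm, hfin]; omega
      have hprevr := hreach (n - 1)
      rw [hps] at hprev
      have hfinal := hsound.2.1 _ hprevr hprev
      -- t enabled at final marking, but t needs input q with final q > 0 ⇒ q = sink
      have hEq := hfire.1 q hq
      rw [hfinal] at hEq
      have hq_sink : q = N.sink := by
        by_contra hqs
        simp [finalMarking, hqs] at hEq
      rw [hq_sink] at hq
      exact N.sink_post_empty t hq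
    refine ⟨t, htB, ?_⟩
    rw [List.getLast?_eq_getLast hσne, List.getLast_eq_getElem]
    rfl
  · -- both nonempty : AlternatePrecedence
    obtain ⟨t0, ht0⟩ : ∃ t0, t0 ∈ preset N p := Set.nonempty_iff_ne_empty.mpr h1
    have hpns : p ≠ N.source := by
      intro hps
      rw [hps] at ht0
      exact N.source_pre_empty t0 ht0
    have h0 : markAt N (initialMarking N) σ 0 p = 0 := by
      simp [markAt, initialMarking, hpns]
    intro i hi
    have hfi := firesSeq_step hrun i.1 i.2
    have hEi : 0 < markAt N (initialMarking N) σ i.1 p := hfi.1 p hi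
    -- existence of a B-position before i
    set Q : ℕ → Prop :=
      fun j => ∃ hj : j < σ.length, j < i.1 ∧ N.Ftp (σ.get ⟨j, hj⟩) p with hQ
    have hex : ∃ j, j ≤ i.1 ∧ Q j := by
      by_contra hno
      push_neg at hno
      have : markAt N (initialMarking N) σ i.1 p = 0 := by
        refine zero_persist hrun p i.1 (le_of_lt i.2) 0 (Nat.zero_le _) h0 ?_
        intro k hk _ hki hB
        exact (hno k (le_of_lt hki)) ⟨hk, hki, hB⟩
      omega
    obtain ⟨j0, hj0i, hQj0⟩ := hex
    set J := Nat.findGreatest Q i.1 with hJ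
    have hQJ : Q J := Nat.findGreatest_spec hj0i hQj0
    obtain ⟨hJlen, hJi, hJB⟩ := hQJ
    have hmax : ∀ k (hk : k < σ.length), J < k → k < i.1 →
        ¬ N.Ftp (σ.get ⟨k, hk⟩) p := by
      intro k hk hJk hki hB
      exact Nat.findGreatest_is_greatest hJk (le_of_lt hki) ⟨hk, hki, hB⟩
    refine ⟨⟨J, hJlen⟩, hJi, hJB, ?_⟩
    intro k hjk hki hkA
    have hfk := firesSeq_step hrun k.1 k.2
    have hEk : 0 < markAt N (initialMarking N) σ k.1 p := hfk.1 p hkA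
    have hkB : ¬ N.Ftp (σ.get k) p := by
      have := hmax k.1 k.2 hjk hki
      simpa using this
    have hdec : markAt N (initialMarking N) σ (k.1 + 1) p
        = markAt N (initialMarking N) σ k.1 p - 1 := by
      refine (hfk.2 p).1 ⟨?_, hkB⟩
      exact hkA
    have hsafe_k : markAt N (initialMarking N) σ k.1 p ≤ 1 :=
      hsafe _ (hreach k.1) p
    have hz : markAt N (initialMarking N) σ (k.1 + 1) p = 0 := by omega
    have : markAt N (initialMarking N) σ i.1 p = 0 := by
      refine zero_persist hrun p i.1 (le_of_lt i.2) (k.1 + 1) hki hz ?_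
      intro m hm hkm hmi
      exact hmax m hm (by have hjk' : J < k.1 := hjk; omega) hmi
    omega
end

section
/- Let WN = (P, T, F) be a safe and sound workflow net with at least one transition (equivalently, with ▶ ≠ ■). Then every finite trace over the alphabet T that is a model trace of the Declare specification DS(WN) is a run of WN. (Theorem 1, direction (ii).) -/
open Classical

variable {P T : Type}

section Aux

variable {α : Type}

/-- Count of elements of a list satisfying a (classical) predicate. -/
noncomputable def cnt (q : α → Prop) : List α → ℕ
  | [] => 0
  | a :: l => (if q a then 1 else 0) + cnt q l

lemma cnt_nil (q : α → Prop) : cnt q [] = 0 := rfl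

lemma cnt_cons (q : α → Prop) (a : α) (l : List α) :
    cnt q (a :: l) = (if q a then 1 else 0) + cnt q l := rfl

lemma cnt_append (q : α → Prop) (l₁ l₂ : List α) :
    cnt q (l₁ ++ l₂) = cnt q l₁ + cnt q l₂ := by
  induction l₁ with
  | nil => simp [cnt]
  | cons a l ih => simp only [List.cons_append, cnt_cons, ih]; omega

lemma cnt_congr {q q' : α → Prop} (h : ∀ x, q x ↔ q' x) (l : List α) :
    cnt q l = cnt q' l := by
  induction l with
  | nil => rfl
  | cons a l ih => simp only [cnt_cons, ih, h a]

lemma cnt_split (q r : α → Prop) (l : List α) :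
    cnt q l = cnt (fun x => q x ∧ r x) l + cnt (fun x => q x ∧ ¬ r x) l := by
  induction l with
  | nil => rfl
  | cons a l ih =>
    simp only [cnt_cons, ih]
    by_cases hq : q a <;> by_cases hr : r a <;> simp [hq, hr] <;> omega

lemma cnt_take_le (q : α → Prop) (l : List α) (n : ℕ) :
    cnt q (l.take n) ≤ cnt q l := by
  induction l generalizing n with
  | nil => simp [cnt]
  | cons a l ih =>
    cases n with
    | zero => simp [cnt]
    | succ m => simp only [List.take_succ_cons, cnt_cons]; exact Nat.add_le_add_left (ih m) _

lemma cnt_take_mono (q : α → Prop) (l : List α) {m n : ℕ} (h : m ≤ n) :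
    cnt q (l.take m) ≤ cnt q (l.take n) := by
  have : l.take m = (l.take n).take m := by rw [List.take_take, Nat.min_eq_left h]
  rw [this]; exact cnt_take_le q _ m

lemma cnt_take_succ (q : α → Prop) {l : List α} {n : ℕ} (h : n < l.length) :
    cnt q (l.take (n + 1)) = cnt q (l.take n) + (if q (l.get ⟨n, h⟩) then 1 else 0) := by
  rw [List.take_succ, cnt_append]
  have : l[n]? = some l[n] := List.getElem?_eq_getElem h
  rw [this]
  simp [cnt, List.get_eq_getElem]

lemma cnt_eq_zero (q : α → Prop) {l : List α} (h : ∀ x ∈ l, ¬ q x) : cnt q l = 0 := by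
  induction l with
  | nil => rfl
  | cons a l ih =>
    simp only [cnt_cons, if_neg (h a (by simp)), ih fun x hx => h x (by simp [hx])]

lemma cnt_pos (q : α → Prop) {l : List α} {a : α} (ha : a ∈ l) (hq : q a) : 0 < cnt q l := by
  induction l with
  | nil => simp at ha
  | cons b l ih =>
    rcases List.mem_cons.1 ha with rfl | h
    · simp [cnt_cons, hq]
    · have := ih h; simp only [cnt_cons]; omega

end Aux
section Main

variable {P T : Type}

lemma altprec_cnt {B A : Set T} {σ : List T} (h : AltPrecC B A σ) :
    ∀ n : ℕ, (cnt (· ∈ A) (σ.take n) ≤ cnt (· ∈ B) (σ.take n)) ∧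
      (∀ hn : n < σ.length, σ.get ⟨n, hn⟩ ∈ A →
        cnt (· ∈ A) (σ.take n) + 1 ≤ cnt (· ∈ B) (σ.take n)) := by
  intro n
  induction n using Nat.strong_induction_on with
  | _ n ih =>
    have part2 : ∀ hn : n < σ.length, σ.get ⟨n, hn⟩ ∈ A →
        cnt (· ∈ A) (σ.take n) + 1 ≤ cnt (· ∈ B) (σ.take n) := by
      intro hn hA
      obtain ⟨j, hji, hjB, hbetween⟩ := h ⟨n, hn⟩ hA
      have hjn : (j : ℕ) < n := hji
      have hjlt : (j : ℕ) < σ.length := j.isLt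
      -- no A-positions strictly between j and n
      have hstep : ∀ m, (j : ℕ) + 1 ≤ m → m ≤ n →
          cnt (· ∈ A) (σ.take m) = cnt (· ∈ A) (σ.take ((j : ℕ) + 1)) := by
        intro m hm1 hm2
        induction m, hm1 using Nat.le_induction with
        | base => rfl
        | succ m hm ihm =>
          have hmlt : m < σ.length := by omega
          have hknA : σ.get ⟨m, hmlt⟩ ∉ A :=
            hbetween ⟨m, hmlt⟩ (by simp only [Fin.lt_def]; omega)
              (by simp only [Fin.lt_def]; omega)
          rw [cnt_take_succ _ hmlt, if_neg hknA, Nat.add_zero, ihm (by omega)]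
      have hAn : cnt (· ∈ A) (σ.take n) = cnt (· ∈ A) (σ.take ((j : ℕ) + 1)) :=
        hstep n (by omega) le_rfl
      have hA1 : cnt (· ∈ A) (σ.take ((j : ℕ) + 1)) =
          cnt (· ∈ A) (σ.take (j : ℕ)) + (if σ.get j ∈ A then 1 else 0) := by
        rw [cnt_take_succ _ hjlt]
      have hB1 : cnt (· ∈ B) (σ.take ((j : ℕ) + 1)) = cnt (· ∈ B) (σ.take (j : ℕ)) + 1 := by
        rw [cnt_take_succ _ hjlt, if_pos (show σ.get ⟨(j : ℕ), hjlt⟩ ∈ B from hjB)]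
      have hBmono : cnt (· ∈ B) (σ.take ((j : ℕ) + 1)) ≤ cnt (· ∈ B) (σ.take n) :=
        cnt_take_mono _ _ (by omega)
      by_cases hjA : σ.get j ∈ A
      · have hIH := (ih (j : ℕ) (by omega)).2 hjlt (by simpa using hjA)
        rw [hAn, hA1, if_pos hjA]
        omega
      · have hIH := (ih (j : ℕ) (by omega)).1
        rw [hAn, hA1, if_neg hjA]
        omega
    refine ⟨?_, part2⟩
    match n with
    | 0 => simp [cnt]
    | Nat.succ m =>
      by_cases hm : m < σ.length
      · rw [cnt_take_succ _ hm, cnt_take_succ _ hm]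
        by_cases hA : σ.get ⟨m, hm⟩ ∈ A
        · have := (ih m (by omega)).2 hm hA
          simp only [if_pos hA]
          split <;> omega
        · have := (ih m (by omega)).1
          simp only [if_neg hA]
          split <;> omega
      · have h1 : σ.take (m + 1) = σ.take m := by
          rw [List.take_of_length_le (by omega), List.take_of_length_le (by omega)]
        rw [h1]; exact (ih m (by omega)).1

lemma fires_marking {N : WorkflowNet P T} {M M' : P → ℕ} {t : T}
    (h : Fires N M t M') (p : P) :
    (N.Fpt p t ∧ ¬ N.Ftp t p → M' p + 1 = M p) ∧
    (N.Ftp t p ∧ ¬ N.Fpt p t → M' p = M p + 1) ∧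
    (¬ (N.Fpt p t ∧ ¬ N.Ftp t p) → ¬ (N.Ftp t p ∧ ¬ N.Fpt p t) → M' p = M p) := by
  obtain ⟨hen, hfl⟩ := h
  refine ⟨fun hc => ?_, (hfl p).2.1, (hfl p).2.2⟩
  have h1 := (hfl p).1 hc
  have h2 := hen p hc.1
  omega

lemma firesSeq_count {N : WorkflowNet P T} :
    ∀ {M M' : P → ℕ} {σ : List T}, FiresSeq N M σ M' → ∀ p : P,
      M' p + cnt (fun t => N.Fpt p t ∧ ¬ N.Ftp t p) σ =
      M p + cnt (fun t => N.Ftp t p ∧ ¬ N.Fpt p t) σ := by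
  intro M M' σ h
  induction h with
  | nil M => simp [cnt]
  | @cons M M₁ M'' t σ hf hs ih =>
    intro p
    have hm := fires_marking hf p
    have hi := ih p
    rw [cnt_cons, cnt_cons]
    by_cases h1 : N.Fpt p t ∧ ¬ N.Ftp t p
    · have := hm.1 h1
      have h2 : ¬ (N.Ftp t p ∧ ¬ N.Fpt p t) := fun hc => hc.2 h1.1
      rw [if_pos h1, if_neg h2]; omega
    · by_cases h2 : N.Ftp t p ∧ ¬ N.Fpt p t
      · have := hm.2.1 h2
        rw [if_neg h1, if_pos h2]; omega
      · have := hm.2.2 h1 h2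
        rw [if_neg h1, if_neg h2]; omega

lemma firesSeq_snoc {N : WorkflowNet P T} {M₀ M M' : P → ℕ} {l : List T} {t : T}
    (h : FiresSeq N M₀ l M) (hf : Fires N M t M') : FiresSeq N M₀ (l ++ [t]) M' := by
  induction h with
  | nil M => exact FiresSeq.cons hf (FiresSeq.nil _)
  | cons hf' _ ih => exact FiresSeq.cons hf' (ih hf)

/-- Theorem 1, direction (ii): every finite trace over the transitions of a
safe and sound workflow net (with `▶ ≠ ■`) that is a model trace of the
synthesized Declare specification is a run of the net. -/
theorem model_trace_is_run {P T : Type} [Finite P] [Finite T]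
    (N : WorkflowNet P T) (hsafe : Safe N) (hsound : Sound N)
    (hne : N.source ≠ N.sink) :
    ∀ σ : List T, ModelTrace N σ → IsRun N σ := by
  intro σ hmod
  have key : ∀ n, n ≤ σ.length → ∃ M, FiresSeq N (initialMarking N) (σ.take n) M := by
    intro n
    induction n with
    | zero => exact fun _ => ⟨_, by simpa using FiresSeq.nil (initialMarking N)⟩
    | succ m ihm =>
      intro hm
      have hmlt : m < σ.length := hm
      obtain ⟨M, hM⟩ := ihm (by omega)
      set t := σ.get ⟨m, hmlt⟩ with ht
      have hen : Enables N M t := by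
        intro p hpt
        have hcount := firesSeq_count hM p
        by_cases hp : p = N.source
        · -- AtMostOne case
          have hpre : preset N p = ∅ := by
            ext x; simp [preset, hp, N.source_pre_empty]
          have hamo : AtMostOneC (postset N p) σ := by
            have := hmod p
            rw [PlaceConstraint, if_pos hpre] at this
            exact this
          have hzero : cnt (fun x => N.Fpt p x ∧ ¬ N.Ftp x p) (σ.take m) = 0 := by
            apply cnt_eq_zero
            rintro x hx ⟨hx1, -⟩
            obtain ⟨k, hk, hget⟩ := List.mem_iff_getElem.1 hx
            have hklen : k < σ.length := by
              have := hk; simp [List.length_take] at this; omega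
            have hkm : k < m := by
              have := hk; simp [List.length_take] at this; omega
            have hgetk : σ.get ⟨k, hklen⟩ = x := by
              rw [← hget]; simp [List.get_eq_getElem, List.getElem_take]
            have heq : (⟨k, hklen⟩ : Fin σ.length) = ⟨m, hmlt⟩ := by
              apply hamo ⟨k, hklen⟩ ⟨m, hmlt⟩
              · rw [hgetk]; exact hx1
              · exact hpt
            simp at heq; omega
          have hinit : initialMarking N p = 1 := by simp [initialMarking, hp]
          rw [hzero, hinit] at hcount
          omega
        · -- AltPrec case
          have hpre : preset N p ≠ ∅ := by
            intro hc
            apply hp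
            apply N.source_unique
            intro x hx
            have : x ∈ preset N p := hx
            rw [hc] at this
            exact this
          have hpost : postset N p ≠ ∅ := by
            intro hc
            have : t ∈ postset N p := hpt
            rw [hc] at this
            exact this
          have halt : AltPrecC (preset N p) (postset N p) σ := by
            have := hmod p
            rw [PlaceConstraint, if_neg hpre, if_neg hpost] at this
            exact this
          have hkey := (altprec_cnt halt m).2 hmlt hpt
          -- split counts
          have hsplitB : cnt (· ∈ preset N p) (σ.take m) =
              cnt (fun x => x ∈ preset N p ∧ x ∈ postset N p) (σ.take m) +
              cnt (fun x => x ∈ preset N p ∧ x ∉ postset N p) (σ.take m) :=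
            cnt_split _ _ _
          have hsplitA : cnt (· ∈ postset N p) (σ.take m) =
              cnt (fun x => x ∈ preset N p ∧ x ∈ postset N p) (σ.take m) +
              cnt (fun x => x ∈ postset N p ∧ x ∉ preset N p) (σ.take m) := by
            rw [cnt_split (· ∈ postset N p) (· ∈ preset N p) (σ.take m)]
            congr 1
            exact cnt_congr (fun x => and_comm) _
          have hBin : cnt (fun x => x ∈ preset N p ∧ x ∉ postset N p) (σ.take m) =
              cnt (fun x => N.Ftp x p ∧ ¬ N.Fpt p x) (σ.take m) :=
            cnt_congr (fun x => Iff.rfl) _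
          have hAout : cnt (fun x => x ∈ postset N p ∧ x ∉ preset N p) (σ.take m) =
              cnt (fun x => N.Fpt p x ∧ ¬ N.Ftp x p) (σ.take m) :=
            cnt_congr (fun x => Iff.rfl) _
          have hinit : initialMarking N p = 0 := by simp [initialMarking, hp]
          rw [hinit] at hcount
          omega
      classical
      refine ⟨fun p => if N.Fpt p t ∧ ¬ N.Ftp t p then M p - 1
                else if N.Ftp t p ∧ ¬ N.Fpt p t then M p + 1 else M p, ?_⟩
      have hfire : Fires N M t (fun p => if N.Fpt p t ∧ ¬ N.Ftp t p then M p - 1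
          else if N.Ftp t p ∧ ¬ N.Fpt p t then M p + 1 else M p) := by
        refine ⟨hen, fun p => ⟨fun h1 => ?_, fun h2 => ?_, fun h1 h2 => ?_⟩⟩
        · simp only [if_pos h1]
        · have h1 : ¬ (N.Fpt p t ∧ ¬ N.Ftp t p) := fun hc => hc.2 h2.1
          simp only [if_neg h1, if_pos h2]
        · simp only [if_neg h1, if_neg h2]
      have htake : σ.take (m + 1) = σ.take m ++ [t] := by
        rw [List.take_succ, List.getElem?_eq_getElem hmlt]
        rfl
      rw [htake]
      exact firesSeq_snoc hM hfire
  obtain ⟨M, hM⟩ := key σ.length le_rfl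
  rw [List.take_length] at hM
  -- the End constraint at the sink
  have hsinkpost : postset N N.sink = ∅ := by
    ext x; simp [postset, N.sink_post_empty]
  have hsinkpre : preset N N.sink ≠ ∅ := by
    intro hc
    apply hne
    symm
    apply N.source_unique
    intro x hx
    have : x ∈ preset N N.sink := hx
    rw [hc] at this
    exact this
  have hend : EndC (preset N N.sink) σ := by
    have := hmod N.sink
    rw [PlaceConstraint, if_neg hsinkpre, if_pos hsinkpost] at this
    exact this
  obtain ⟨a, haB, hlast⟩ := hend
  have hamem : a ∈ σ := by
    obtain ⟨hne', heq⟩ := List.mem_getLast?_eq_getLast (Option.mem_def.2 hlast)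
    rw [heq]
    exact List.getLast_mem hne'
  have hcount := firesSeq_count hM N.sink
  have hout0 : cnt (fun x => N.Fpt N.sink x ∧ ¬ N.Ftp x N.sink) σ = 0 :=
    cnt_eq_zero _ (fun x _ hx => N.sink_post_empty x hx.1)
  have hinpos : 0 < cnt (fun x => N.Ftp x N.sink ∧ ¬ N.Fpt N.sink x) σ :=
    cnt_pos _ hamem ⟨haB, N.sink_post_empty a⟩
  have hinit : initialMarking N N.sink = 0 := by
    simp [initialMarking, (Ne.symm hne)]
  have hMsink : 0 < M N.sink := by
    rw [hout0, hinit] at hcount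
    omega
  have hfin : M = finalMarking N := hsound.2.1 M ⟨σ, hM⟩ hMsink
  rw [hfin] at hM
  exact hM

end Main
end

section
/- Let WN = (P, T, F) be a safe and sound workflow net with at least one transition (equivalently, with ▶ ≠ ■). Then the set of runs of WN, viewed as a language over the alphabet T, coincides exactly with the set of model traces of the Declare specification DS(WN). (Theorem 1, combined.) -/
open Classical

variable {P T : Type}

/-! ### Auxiliary infrastructure -/

/-- The (unique) marking obtained by firing `t` at `M`. -/
noncomputable def step (N : WorkflowNet P T) (M : P → ℕ) (t : T) : P → ℕ :=
  fun p =>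
    if N.Fpt p t ∧ ¬ N.Ftp t p then M p - 1
    else if N.Ftp t p ∧ ¬ N.Fpt p t then M p + 1
    else M p

lemma fires_iff {N : WorkflowNet P T} {M M' : P → ℕ} {t : T} :
    Fires N M t M' ↔ Enables N M t ∧ M' = step N M t := by
  constructor
  · rintro ⟨he, hf⟩
    refine ⟨he, funext fun p => ?_⟩
    obtain ⟨h1, h2, h3⟩ := hf p
    unfold step
    split_ifs with hA hB
    · exact h1 hA
    · exact h2 hB
    · exact h3 hA hB
  · rintro ⟨he, rfl⟩
    refine ⟨he, fun p => ?_⟩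
    unfold step
    split_ifs with h1 h2 <;> refine ⟨?_, ?_, ?_⟩ <;> intros <;> first | rfl | tauto

/-- The marking reached after firing the first `n` transitions of `σ` from `M0`. -/
noncomputable def markSeq (N : WorkflowNet P T) (M0 : P → ℕ) (σ : List T) (n : ℕ) :
    P → ℕ :=
  (σ.take n).foldl (step N) M0

lemma markSeq_zero (N : WorkflowNet P T) (M0 : P → ℕ) (σ : List T) :
    markSeq N M0 σ 0 = M0 := rfl

lemma markSeq_succ (N : WorkflowNet P T) (M0 : P → ℕ) (σ : List T) {n : ℕ}
    (h : n < σ.length) :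
    markSeq N M0 σ (n + 1) = step N (markSeq N M0 σ n) (σ.get ⟨n, h⟩) := by
  unfold markSeq
  rw [List.take_succ, List.foldl_append]
  simp [List.getElem?_eq_getElem h]

lemma markSeq_cons (N : WorkflowNet P T) (M0 : P → ℕ) (t : T) (σ : List T) (n : ℕ) :
    markSeq N M0 (t :: σ) (n + 1) = markSeq N (step N M0 t) σ n := by
  unfold markSeq
  simp [List.take_succ_cons]

lemma firesSeq_to {N : WorkflowNet P T} {M0 M : P → ℕ} {σ : List T}
    (h : FiresSeq N M0 σ M) :
    (∀ n (hn : n < σ.length), Enables N (markSeq N M0 σ n) (σ.get ⟨n, hn⟩)) ∧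
      M = markSeq N M0 σ σ.length := by
  induction h with
  | nil M => exact ⟨fun n hn => absurd hn (by simp), rfl⟩
  | @cons M M' M'' t σ' hf hs ih =>
    obtain ⟨he, rfl⟩ := fires_iff.mp hf
    obtain ⟨ih1, ih2⟩ := ih
    constructor
    · intro n hn
      match n with
      | 0 => exact he
      | Nat.succ m =>
        rw [markSeq_cons]
        exact ih1 m (by simpa using hn)
    · rw [List.length_cons, markSeq_cons]
      exact ih2

lemma firesSeq_of (N : WorkflowNet P T) {M0 : P → ℕ} (σ : List T)
    (h : ∀ n (hn : n < σ.length), Enables N (markSeq N M0 σ n) (σ.get ⟨n, hn⟩)) :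
    FiresSeq N M0 σ (markSeq N M0 σ σ.length) := by
  induction σ generalizing M0 with
  | nil => exact FiresSeq.nil M0
  | cons t σ' ih =>
    have h0 : Enables N M0 t := h 0 (by simp)
    have hrest : ∀ n (hn : n < σ'.length),
        Enables N (markSeq N (step N M0 t) σ' n) (σ'.get ⟨n, hn⟩) := by
      intro n hn
      have := h (n + 1) (by simpa using Nat.succ_lt_succ hn)
      rwa [markSeq_cons] at this
    have := ih (M0 := step N M0 t) hrest
    have hcons := FiresSeq.cons (fires_iff.mpr ⟨h0, rfl⟩) this
    rwa [← markSeq_cons N M0 t σ' σ'.length, ← List.length_cons] at hcons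

/-- If no transition in `[a, b)` consumes from `p`, the token count at `p`
does not decrease. -/
lemma markSeq_mono (N : WorkflowNet P T) (M0 : P → ℕ) (σ : List T) (p : P) {a b : ℕ}
    (hab : a ≤ b) (hb : b ≤ σ.length)
    (h : ∀ k (hk : k < σ.length), a ≤ k → k < b → ¬ N.Fpt p (σ.get ⟨k, hk⟩)) :
    markSeq N M0 σ a p ≤ markSeq N M0 σ b p := by
  induction b, hab using Nat.le_induction with
  | base => exact le_refl _
  | succ b hab ih =>
    have hb' : b < σ.length := lt_of_lt_of_le (Nat.lt_succ_self b) hb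
    rw [markSeq_succ N M0 σ hb']
    refine le_trans (ih (le_of_lt hb')
      (fun k hk h1 h2 => h k hk h1 (h2.trans (Nat.lt_succ_self b)))) ?_
    unfold step
    split_ifs with h1 h2
    · exact absurd h1.1 (h b hb' hab (Nat.lt_succ_self b))
    · omega
    · exact le_refl _

/-- If no transition in `[a, b)` produces into `p`, the token count at `p`
does not increase. -/
lemma markSeq_anti (N : WorkflowNet P T) (M0 : P → ℕ) (σ : List T) (p : P) {a b : ℕ}
    (hab : a ≤ b) (hb : b ≤ σ.length)
    (h : ∀ k (hk : k < σ.length), a ≤ k → k < b → ¬ N.Ftp (σ.get ⟨k, hk⟩) p) :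
    markSeq N M0 σ b p ≤ markSeq N M0 σ a p := by
  induction b, hab using Nat.le_induction with
  | base => exact le_refl _
  | succ b hab ih =>
    have hb' : b < σ.length := lt_of_lt_of_le (Nat.lt_succ_self b) hb
    rw [markSeq_succ N M0 σ hb']
    refine le_trans ?_ (ih (le_of_lt hb')
      (fun k hk h1 h2 => h k hk h1 (h2.trans (Nat.lt_succ_self b))))
    unfold step
    split_ifs with h1 h2
    · omega
    · exact absurd h2.1 (h b hb' hab (Nat.lt_succ_self b))
    · exact le_refl _

/-- Every prefix of a fireable sequence reaches a reachable marking. -/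
lemma reachable_markSeq (N : WorkflowNet P T) {σ : List T}
    (h : ∀ n (hn : n < σ.length),
      Enables N (markSeq N (initialMarking N) σ n) (σ.get ⟨n, hn⟩))
    {n : ℕ} (hn : n ≤ σ.length) :
    Reachable N (markSeq N (initialMarking N) σ n) := by
  have hms : ∀ m, m ≤ n → markSeq N (initialMarking N) (σ.take n) m
      = markSeq N (initialMarking N) σ m := by
    intro m hm
    unfold markSeq
    rw [List.take_take, Nat.min_eq_left hm]
  have hlen : (σ.take n).length = n := by
    rw [List.length_take, Nat.min_eq_left hn]
  refine ⟨σ.take n, ?_⟩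
  have hpref : ∀ m (hm : m < (σ.take n).length),
      Enables N (markSeq N (initialMarking N) (σ.take n) m) ((σ.take n).get ⟨m, hm⟩) := by
    intro m hm
    have hmn : m < n := by rwa [hlen] at hm
    have hget : (σ.take n).get ⟨m, hm⟩ = σ.get ⟨m, lt_of_lt_of_le hmn hn⟩ := by
      simp [List.getElem_take]
    rw [hms m (le_of_lt hmn), hget]
    exact h m _
  have := firesSeq_of N (σ.take n) (M0 := initialMarking N) hpref
  rwa [hlen, hms n (le_refl n)] at this

/-- Every transition has at least one input place. -/
lemma exists_input (N : WorkflowNet P T) (t : T) : ∃ p, N.Fpt p t := by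
  obtain ⟨h1, -⟩ := N.on_path (Sum.inr t)
  rcases Relation.ReflTransGen.cases_tail h1 with h | ⟨c, -, hc⟩
  · exact absurd h (by simp)
  · cases c with
    | inl p => exact ⟨p, hc⟩
    | inr t' => exact hc.elim

lemma preset_empty_iff (N : WorkflowNet P T) (p : P) :
    preset N p = ∅ ↔ p = N.source := by
  constructor
  · intro h
    exact N.source_unique p fun t ht => Set.eq_empty_iff_forall_notMem.mp h t ht
  · rintro rfl
    exact Set.eq_empty_iff_forall_notMem.mpr fun t ht => N.source_pre_empty t ht

lemma postset_empty_iff (N : WorkflowNet P T) (p : P) :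
    postset N p = ∅ ↔ p = N.sink := by
  constructor
  · intro h
    exact N.sink_unique p fun t ht => Set.eq_empty_iff_forall_notMem.mp h t ht
  · rintro rfl
    exact Set.eq_empty_iff_forall_notMem.mpr fun t ht => N.sink_post_empty t ht

/-- Theorem 1, combined: for a safe and sound workflow net (with `▶ ≠ ■`),
the language of runs coincides exactly with the set of model traces of the
synthesized Declare specification. -/
theorem runs_eq_model_traces {P T : Type} [Finite P] [Finite T]
    (N : WorkflowNet P T) (hsafe : Safe N) (hsound : Sound N)
    (hne : N.source ≠ N.sink) :
    {σ : List T | IsRun N σ} = {σ : List T | ModelTrace N σ} := by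
  ext σ
  simp only [Set.mem_setOf_eq]
  constructor
  · -- Run ⇒ model trace
    intro hrun
    obtain ⟨hen, hfin⟩ := firesSeq_to hrun
    intro p
    unfold PlaceConstraint
    split_ifs with hpre hpost
    · -- p = source : AtMostOne(p•)
      have hps : p = N.source := (preset_empty_iff N p).mp hpre
      subst hps
      have key : ∀ a b : Fin σ.length, (a : ℕ) < (b : ℕ) →
          σ.get a ∈ postset N N.source → σ.get b ∈ postset N N.source → False := by
        intro a b hab ha hb
        have hnopro : ∀ k (hk : k < σ.length) , 0 ≤ k → k < (a : ℕ) →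
            ¬ N.Ftp (σ.get ⟨k, hk⟩) N.source := fun k hk _ _ => N.source_pre_empty _
        have h1 : markSeq N (initialMarking N) σ a N.source ≤ 1 := by
          have := markSeq_anti N (initialMarking N) σ N.source (Nat.zero_le _)
            (le_of_lt a.isLt) hnopro
          simpa [markSeq_zero, initialMarking] using this
        have hstep : markSeq N (initialMarking N) σ ((a : ℕ) + 1) N.source
            = markSeq N (initialMarking N) σ a N.source - 1 := by
          rw [markSeq_succ N (initialMarking N) σ a.isLt]
          unfold step
          rw [if_pos ⟨ha, N.source_pre_empty _⟩]
        have h2 : markSeq N (initialMarking N) σ b N.source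
            ≤ markSeq N (initialMarking N) σ ((a : ℕ) + 1) N.source :=
          markSeq_anti N (initialMarking N) σ N.source hab (le_of_lt b.isLt)
            (fun k hk _ _ => N.source_pre_empty _)
        have h3 : 0 < markSeq N (initialMarking N) σ b N.source := hen b b.isLt _ hb
        omega
      intro i j hi hj
      rcases Nat.lt_trichotomy (i : ℕ) (j : ℕ) with h | h | h
      · exact absurd (key i j h hi hj) (not_false)
      · exact Fin.ext h
      · exact absurd (key j i h hj hi) (not_false)
    · -- p = sink : End(•p)
      have hps : p = N.sink := (postset_empty_iff N p).mp hpost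
      subst hps
      have hσne : σ ≠ [] := by
        rintro rfl
        have := congrFun hfin N.source
        simp [markSeq_zero, initialMarking, finalMarking, hne] at this
      obtain ⟨n, hnlen⟩ : ∃ n, σ.length = n + 1 :=
        Nat.exists_eq_succ_of_ne_zero (by simpa using hσne)
      have hnlt : n < σ.length := by omega
      set a := σ.get ⟨n, hnlt⟩ with ha
      have hBa : N.Ftp a N.sink := by
        by_contra hnot
        have hstep : markSeq N (initialMarking N) σ (n + 1) N.sink
            = markSeq N (initialMarking N) σ n N.sink := by
          rw [markSeq_succ N (initialMarking N) σ hnlt]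
          unfold step
          rw [if_neg (fun h => N.sink_post_empty _ h.1), if_neg (fun h => hnot h.1)]
        have hfin' : markSeq N (initialMarking N) σ (n + 1) N.sink = 1 := by
          have := congrFun hfin N.sink
          simp [finalMarking] at this
          rw [hnlen] at this
          omega
        have hreach : Reachable N (markSeq N (initialMarking N) σ n) :=
          reachable_markSeq N hen (le_of_lt hnlt)
        have hfinal : markSeq N (initialMarking N) σ n = finalMarking N :=
          hsound.2.1 _ hreach (by omega)
        obtain ⟨q, hq⟩ := exists_input N a
        have henq : 0 < markSeq N (initialMarking N) σ n q := hen n hnlt q hq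
        rw [hfinal] at henq
        simp only [finalMarking] at henq
        split_ifs at henq with hq'
        · exact N.sink_post_empty a (hq' ▸ hq)
        · omega
      refine ⟨a, hBa, ?_⟩
      rw [List.getLast?_eq_getElem?]
      have hidx : σ.length - 1 = n := by omega
      rw [hidx, List.getElem?_eq_getElem hnlt]
      simp [ha, List.get_eq_getElem]
    · -- general p : AlternatePrecedence(•p, p•)
      intro i hiA
      have hpnes : p ≠ N.source := fun h => hpre ((preset_empty_iff N p).mpr h)
      have hM0 : markSeq N (initialMarking N) σ 0 p = 0 := by
        simp [markSeq_zero, initialMarking, hpnes]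
      have hMi : 0 < markSeq N (initialMarking N) σ i p := hen i i.isLt p hiA
      have hex : ∃ j, j < (i : ℕ) ∧ ∃ hj : j < σ.length, N.Ftp (σ.get ⟨j, hj⟩) p := by
        by_contra hno
        push_neg at hno
        have := markSeq_anti N (initialMarking N) σ p (Nat.zero_le _)
          (le_of_lt i.isLt) (fun k hk _ hki => by
            intro hB
            exact hno k hki hk hB)
        omega
      obtain ⟨j0, hj0i, hj0len, hj0B⟩ := hex
      set Q : ℕ → Prop := fun j => j < (i : ℕ) ∧ ∃ hj : j < σ.length,
        N.Ftp (σ.get ⟨j, hj⟩) p with hQdef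
      set j := Nat.findGreatest Q i with hjdef
      have hQj : Q j := Nat.findGreatest_spec (le_of_lt hj0i) ⟨hj0i, hj0len, hj0B⟩
      have hmax : ∀ k (hk : k < σ.length), j < k → k < (i : ℕ) →
          ¬ N.Ftp (σ.get ⟨k, hk⟩) p := by
        intro k hk hjk hki hB
        exact Nat.findGreatest_is_greatest hjk (le_of_lt hki) ⟨hki, hk, hB⟩
      obtain ⟨hji, hjlen, hjB⟩ := hQj
      have hnoA : ∀ k (hk : k < σ.length), j < k → k < (i : ℕ) →
          ¬ N.Fpt p (σ.get ⟨k, hk⟩) := by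
        intro k hk hjk hki hA
        have h1 : 0 < markSeq N (initialMarking N) σ k p := hen k hk p hA
        have hsafe' : markSeq N (initialMarking N) σ k p ≤ 1 :=
          hsafe _ (reachable_markSeq N hen (le_of_lt hk)) p
        have hstep : markSeq N (initialMarking N) σ (k + 1) p
            = markSeq N (initialMarking N) σ k p - 1 := by
          rw [markSeq_succ N (initialMarking N) σ hk]
          unfold step
          rw [if_pos ⟨hA, hmax k hk hjk hki⟩]
        have hanti : markSeq N (initialMarking N) σ i p
            ≤ markSeq N (initialMarking N) σ (k + 1) p :=
          markSeq_anti N (initialMarking N) σ p (by omega) (le_of_lt i.isLt)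
            (fun m hm h1' h2' => hmax m hm (by omega) h2')
        omega
      refine ⟨⟨j, hji.trans i.isLt⟩, hji, hjB, ?_⟩
      intro k hjk hki hA
      exact hnoA k k.isLt hjk hki hA
  · -- Model trace ⇒ run
    intro hmt
    have hen : ∀ n (hn : n < σ.length),
        Enables N (markSeq N (initialMarking N) σ n) (σ.get ⟨n, hn⟩) := by
      intro n
      induction n using Nat.strong_induction_on with
      | _ n ih =>
        intro hn p hp
        by_cases hpre : preset N p = ∅
        · have hps : p = N.source := (preset_empty_iff N p).mp hpre
          subst hps
          have hC := hmt N.source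
          unfold PlaceConstraint at hC
          rw [if_pos hpre] at hC
          have hno : ∀ k (hk : k < σ.length), 0 ≤ k → k < n →
              ¬ N.Fpt N.source (σ.get ⟨k, hk⟩) := by
            intro k hk _ hkn hkA
            have := hC ⟨k, hk⟩ ⟨n, hn⟩ hkA hp
            simp only [Fin.mk.injEq] at this
            omega
          have hup : markSeq N (initialMarking N) σ 0 N.source
              ≤ markSeq N (initialMarking N) σ n N.source :=
            markSeq_mono N (initialMarking N) σ N.source (Nat.zero_le _)
              (le_of_lt hn) hno
          have h0 : markSeq N (initialMarking N) σ 0 N.source = 1 := by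
            simp [markSeq_zero, initialMarking]
          omega
        · have hpostne : postset N p ≠ ∅ := fun h =>
            Set.eq_empty_iff_forall_notMem.mp h _ hp
          have hC := hmt p
          unfold PlaceConstraint at hC
          rw [if_neg hpre, if_neg hpostne] at hC
          obtain ⟨jf, hjlt, hjB, hjno⟩ := hC ⟨n, hn⟩ hp
          have hjn : (jf : ℕ) < n := hjlt
          have hj1 : 0 < markSeq N (initialMarking N) σ ((jf : ℕ) + 1) p := by
            rw [markSeq_succ N (initialMarking N) σ jf.isLt]
            by_cases hself : N.Fpt p (σ.get jf)
            · have hprev : 0 < markSeq N (initialMarking N) σ (jf : ℕ) p :=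
                ih (jf : ℕ) hjn jf.isLt p hself
              unfold step
              split_ifs with h1 h2
              · exact absurd hjB h1.2
              · omega
              · exact hprev
            · unfold step
              rw [if_neg (fun h => hself h.1), if_pos ⟨hjB, hself⟩]
              omega
          have hmono : markSeq N (initialMarking N) σ ((jf : ℕ) + 1) p
              ≤ markSeq N (initialMarking N) σ n p := by
            refine markSeq_mono N (initialMarking N) σ p (by omega) (le_of_lt hn) ?_
            intro k hk h1 h2 hA
            exact hjno ⟨k, hk⟩ (by simpa [Fin.lt_def] using (by omega : (jf : ℕ) < k))
              (by simpa [Fin.lt_def] using h2) hA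
          omega
    have hfs : FiresSeq N (initialMarking N) σ
        (markSeq N (initialMarking N) σ σ.length) := firesSeq_of N σ hen
    have hCs := hmt N.sink
    unfold PlaceConstraint at hCs
    have hprene : preset N N.sink ≠ ∅ := fun h =>
      hne ((preset_empty_iff N N.sink).mp h).symm
    rw [if_neg hprene, if_pos ((postset_empty_iff N N.sink).mpr rfl)] at hCs
    obtain ⟨a, haB, hlast⟩ := hCs
    have hσne : σ ≠ [] := by rintro rfl; simp at hlast
    obtain ⟨n, hnlen⟩ : ∃ n, σ.length = n + 1 :=
      Nat.exists_eq_succ_of_ne_zero (by simpa using hσne)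
    have hnlt : n < σ.length := by omega
    have hget : σ.get ⟨n, hnlt⟩ = a := by
      rw [List.getLast?_eq_getElem?, hnlen] at hlast
      simpa [List.getElem?_eq_getElem hnlt, List.get_eq_getElem] using hlast
    have hfinal : 0 < markSeq N (initialMarking N) σ σ.length N.sink := by
      rw [hnlen, markSeq_succ N (initialMarking N) σ hnlt]
      unfold step
      rw [if_neg (fun h => N.sink_post_empty _ h.1),
        if_pos ⟨hget ▸ haB, N.sink_post_empty _⟩]
      omega
    have hreach : Reachable N (markSeq N (initialMarking N) σ σ.length) := ⟨σ, hfs⟩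
    have hfin := hsound.2.1 _ hreach hfinal
    unfold IsRun
    rw [← hfin]
    exact hfs
end

section
/- For every safe and sound workflow net WN = (P, T, F) with at least one transition (equivalently, with ▶ ≠ ■), the language of runs of WN, as a subset of T*, is a star-free regular language. (Theorem 2: languages of safe and sound workflow nets are star-free.) -/
open Classical

variable {P T : Type}

/-- Star-free languages over `α`: generated from the empty language and the
singleton languages `{[a]}` by union, concatenation, and complementation
(relative to the set of all finite words). -/
inductive StarFree {α : Type} : Set (List α) → Prop
  | empty : StarFree (∅ : Set (List α))
  | single (a : α) : StarFree {[a]}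
  | union {L₁ L₂ : Set (List α)} : StarFree L₁ → StarFree L₂ → StarFree (L₁ ∪ L₂)
  | concat {L₁ L₂ : Set (List α)} : StarFree L₁ → StarFree L₂ →
      StarFree {w : List α | ∃ u ∈ L₁, ∃ v ∈ L₂, w = u ++ v}
  | compl {L : Set (List α)} : StarFree L → StarFree Lᶜ


namespace SFX

variable {α : Type}

def Cat (L₁ L₂ : Set (List α)) : Set (List α) := {w | ∃ u ∈ L₁, ∃ v ∈ L₂, w = u ++ v}

def Sym (A : Set α) : Set (List α) := {w | ∃ a ∈ A, w = [a]}

def Uw : Set (List α) := Set.univ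

theorem sf_cat {L₁ L₂ : Set (List α)} (h₁ : StarFree L₁) (h₂ : StarFree L₂) :
    StarFree (Cat L₁ L₂) := StarFree.concat h₁ h₂

theorem sf_univ : StarFree (Uw : Set (List α)) := by
  have := StarFree.compl (StarFree.empty (α := α))
  simpa [Uw] using this

theorem sf_inter {L₁ L₂ : Set (List α)} (h₁ : StarFree L₁) (h₂ : StarFree L₂) :
    StarFree (L₁ ∩ L₂) := by
  have : L₁ ∩ L₂ = (L₁ᶜ ∪ L₂ᶜ)ᶜ := by rw [Set.compl_union, compl_compl, compl_compl]
  rw [this]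
  exact StarFree.compl (StarFree.union (StarFree.compl h₁) (StarFree.compl h₂))

theorem sf_biUnion {ι : Type} (s : Finset ι) (C : ι → Set (List α))
    (h : ∀ i, StarFree (C i)) : StarFree (⋃ i ∈ s, C i) := by
  classical
  induction s using Finset.induction_on with
  | empty => simpa using StarFree.empty
  | insert _ _ hx ih =>
      rw [Finset.set_biUnion_insert]
      exact StarFree.union (h _) ih

theorem sf_iUnion {ι : Type} [Finite ι] (C : ι → Set (List α))
    (h : ∀ i, StarFree (C i)) : StarFree (⋃ i, C i) := by
  classical
  have : Fintype ι := Fintype.ofFinite ι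
  have e : (⋃ i, C i) = ⋃ i ∈ (Finset.univ : Finset ι), C i := by simp
  rw [e]; exact sf_biUnion _ _ h

theorem sf_iInter {ι : Type} [Finite ι] (C : ι → Set (List α))
    (h : ∀ i, StarFree (C i)) : StarFree (⋂ i, C i) := by
  have e : (⋂ i, C i) = (⋃ i, (C i)ᶜ)ᶜ := by simp
  rw [e]; exact StarFree.compl (sf_iUnion _ fun i => StarFree.compl (h i))

theorem sf_sym [Finite α] (A : Set α) : StarFree (Sym A) := by
  have e : Sym A = ⋃ a : A, {[(a : α)]} := by
    ext w; simp [Sym]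
    constructor
    · rintro ⟨a, ha, rfl⟩; exact ⟨a, ha, rfl⟩
    · rintro ⟨a, ha, rfl⟩; exact ⟨a, ha, rfl⟩
  rw [e]; exact sf_iUnion _ fun a => StarFree.single _



theorem getElem_mid (u v : List α) (a : α) :
    (u ++ a :: v)[u.length]'(by simp) = a := by
  rw [List.getElem_append_right (le_refl u.length)]
  simp

theorem eq_take_cons_drop (σ : List α) {i : ℕ} (h : i < σ.length) :
    σ = σ.take i ++ σ[i] :: σ.drop (i+1) := by
  have := List.take_append_drop i σ
  rw [List.drop_eq_getElem_cons h] at this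
  exact this.symm

theorem two_split {σ : List α} {i j : ℕ} (hij : i < j) (hj : j < σ.length) :
    ∃ u v w, σ = u ++ (σ[i]'(lt_trans hij hj)) :: (v ++ σ[j] :: w) := by
  have hi : i < σ.length := lt_trans hij hj
  have h1 : σ = σ.take i ++ σ[i] :: σ.drop (i+1) := eq_take_cons_drop σ hi
  have hj' : j - (i+1) < (σ.drop (i+1)).length := by simp; omega
  have h2 := eq_take_cons_drop (σ.drop (i+1)) hj'
  have hval : (σ.drop (i+1))[j - (i+1)]'hj' = σ[j] := by
    rw [List.getElem_drop]; congr 1; omega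
  rw [hval] at h2
  exact ⟨σ.take i, (σ.drop (i+1)).take (j-(i+1)), (σ.drop (i+1)).drop (j-(i+1)+1),
    h1.trans (congrArg (fun l => σ.take i ++ σ[i] :: l) h2)⟩

theorem index_of_append {σ u v : List α} {a : α} (h : σ = u ++ a :: v) :
    ∃ hu : u.length < σ.length, σ[u.length] = a := by
  subst h
  refine ⟨by simp, getElem_mid u v a⟩


theorem getElem_mem_mid {u v w : List α} {x y : α} {j : ℕ} (h1 : u.length < j)
    (h2 : j < u.length + 1 + v.length) (hj : j < (u ++ x :: (v ++ y :: w)).length) :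
    (u ++ x :: (v ++ y :: w))[j] ∈ v := by
  rw [List.getElem_append_right (le_of_lt h1)]
  obtain ⟨n, hn, hnv⟩ : ∃ n, j - u.length = n + 1 ∧ n < v.length :=
    ⟨j - u.length - 1, by omega, by omega⟩
  simp only [hn, List.getElem_cons_succ]
  rw [List.getElem_append_left hnv]
  exact List.getElem_mem _

theorem mem_cat {L₁ L₂ : Set (List α)} {σ : List α} :
    σ ∈ Cat L₁ L₂ ↔ ∃ u ∈ L₁, ∃ v ∈ L₂, σ = u ++ v := Iff.rfl

def NoSym (A : Set α) : Set (List α) := (Cat Uw (Cat (Sym A) Uw))ᶜ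

theorem sf_noSym [Finite α] (A : Set α) : StarFree (NoSym A) :=
  StarFree.compl (sf_cat sf_univ (sf_cat (sf_sym A) sf_univ))

theorem mem_noSym {A : Set α} {σ : List α} : σ ∈ NoSym A ↔ ∀ x ∈ σ, x ∉ A := by
  simp only [NoSym, Set.mem_compl_iff]
  constructor
  · intro h x hx hxA
    obtain ⟨s, t, rfl⟩ := List.append_of_mem hx
    exact h ⟨s, trivial, x :: t, ⟨[x], ⟨x, hxA, rfl⟩, t, trivial, rfl⟩, rfl⟩
  · rintro h ⟨u, -, w, ⟨la, ⟨a, haA, rfl⟩, v, -, rfl⟩, rfl⟩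
    exact h a (by simp) haA

theorem mem_two_pattern {A B : Set α} {σ : List α} :
    σ ∈ Cat Uw (Cat (Sym A) (Cat Uw (Cat (Sym B) Uw))) ↔
    ∃ (i j : ℕ) (hj : j < σ.length) (hi : i < j),
      σ[i]'(lt_trans hi hj) ∈ A ∧ σ[j] ∈ B := by
  constructor
  · rintro ⟨u, -, w1, ⟨la, ⟨a, haA, rfl⟩, w2, ⟨v, -, w3, ⟨lb, ⟨b, hbB, rfl⟩, w4, -, rfl⟩, rfl⟩, rfl⟩, rfl⟩
    have e1 : u ++ ([a] ++ (v ++ ([b] ++ w4))) = u ++ a :: (v ++ b :: w4) := by simp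
    have e2 : u ++ ([a] ++ (v ++ ([b] ++ w4))) = (u ++ a :: v) ++ b :: w4 := by simp
    obtain ⟨h1, hv1⟩ := index_of_append e1
    obtain ⟨h2, hv2⟩ := index_of_append e2
    have hl : (u ++ a :: v).length = u.length + 1 + v.length := by simp; omega
    simp only [hl] at hv2 h2
    exact ⟨u.length, u.length + 1 + v.length, h2, by omega, hv1.symm ▸ haA, hv2.symm ▸ hbB⟩
  · rintro ⟨i, j, hj, hij, hiA, hjB⟩
    obtain ⟨u, v, w, hd⟩ := two_split hij hj
    exact ⟨u, trivial, _, ⟨[σ[i]'(lt_trans hij hj)], ⟨_, hiA, rfl⟩, _,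
      ⟨v, trivial, _, ⟨[σ[j]], ⟨_, hjB, rfl⟩, w, trivial, rfl⟩, rfl⟩, rfl⟩,
      by simpa using hd⟩


def LangAMO (A : Set α) : Set (List α) :=
  (Cat Uw (Cat (Sym A) (Cat Uw (Cat (Sym A) Uw))))ᶜ

theorem sf_langAMO [Finite α] (A : Set α) : StarFree (LangAMO A) :=
  StarFree.compl (sf_cat sf_univ (sf_cat (sf_sym A) (sf_cat sf_univ (sf_cat (sf_sym A) sf_univ))))

theorem amo_eq (A : Set α) : {σ : List α | AtMostOneC A σ} = LangAMO A := by
  ext σ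
  simp only [Set.mem_setOf_eq, LangAMO, Set.mem_compl_iff, mem_two_pattern]
  constructor
  · rintro h ⟨i, j, hj, hij, hiA, hjA⟩
    have h2 := h ⟨i, lt_trans hij hj⟩ ⟨j, hj⟩ (by simpa using hiA) (by simpa using hjA)
    have := congrArg Fin.val h2
    simp at this; omega
  · intro h i j hiA hjA
    simp only [List.get_eq_getElem] at hiA hjA
    by_contra hne
    have hv : i.val ≠ j.val := fun hv => hne (Fin.ext hv)
    rcases Nat.lt_or_ge i.val j.val with hlt | hge
    · exact h ⟨i.val, j.val, j.isLt, hlt, hiA, hjA⟩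
    · exact h ⟨j.val, i.val, i.isLt, by omega, hjA, hiA⟩

def LangEnd (A : Set α) : Set (List α) := Cat Uw (Sym A)

theorem sf_langEnd [Finite α] (A : Set α) : StarFree (LangEnd A) := sf_cat sf_univ (sf_sym A)

theorem end_eq (A : Set α) : {σ : List α | EndC A σ} = LangEnd A := by
  ext σ
  simp only [Set.mem_setOf_eq, EndC, LangEnd]
  constructor
  · rintro ⟨a, haA, hlast⟩
    have hne : σ ≠ [] := by rintro rfl; simp at hlast
    refine ⟨σ.dropLast, trivial, [a], ⟨a, haA, rfl⟩, ?_⟩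
    have h1 : σ.getLast hne = a := by
      rw [List.getLast?_eq_getLast hne] at hlast; exact Option.some.inj hlast
    rw [← h1]; exact (List.dropLast_append_getLast hne).symm
  · rintro ⟨u, -, la, ⟨a, haA, rfl⟩, rfl⟩
    exact ⟨a, haA, List.getLast?_concat⟩

def LangAP (B A : Set α) : Set (List α) :=
  (Cat (NoSym B) (Cat (Sym A) Uw) ∪
   Cat Uw (Cat (Sym (A \ B)) (Cat (NoSym (A ∪ B)) (Cat (Sym A) Uw))))ᶜ

theorem sf_langAP [Finite α] (B A : Set α) : StarFree (LangAP B A) :=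
  StarFree.compl (StarFree.union
    (sf_cat (sf_noSym B) (sf_cat (sf_sym A) sf_univ))
    (sf_cat sf_univ (sf_cat (sf_sym _) (sf_cat (sf_noSym _) (sf_cat (sf_sym A) sf_univ)))))

theorem ap_eq (B A : Set α) : {σ : List α | AltPrecC B A σ} = LangAP B A := by
  ext σ
  simp only [Set.mem_setOf_eq, LangAP, Set.mem_compl_iff, Set.mem_union]
  constructor
  · intro h hmem
    rcases hmem with h1 | h2
    · rcases h1 with ⟨u, hu, w1, ⟨la, ⟨a, haA, rfl⟩, v, -, rfl⟩, heq⟩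
      have heq' : σ = u ++ a :: v := by simpa using heq
      obtain ⟨hi, hval⟩ := index_of_append heq'
      obtain ⟨j, hji, hjB, -⟩ := h ⟨u.length, hi⟩
        (by simp only [List.get_eq_getElem]; exact hval.symm ▸ haA)
      have hjlt : j.val < u.length := hji
      have hmem : σ.get j ∈ u := by
        rw [List.get_eq_getElem]
        subst heq'
        rw [List.getElem_append_left hjlt]
        exact List.getElem_mem _
      exact (mem_noSym.mp hu _ hmem) hjB
    · rcases h2 with ⟨u, -, w1, ⟨lx, ⟨x, hxAB, rfl⟩, w2, ⟨v, hv, w3, ⟨ly, ⟨y, hyA, rfl⟩, w, -, rfl⟩, rfl⟩, rfl⟩, heq⟩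
      have heq' : σ = u ++ x :: (v ++ y :: w) := by simpa using heq
      have e2 : σ = (u ++ x :: v) ++ y :: w := by rw [heq']; simp
      obtain ⟨hiy, hvy⟩ := index_of_append e2
      have hiyl : (u ++ x :: v).length = u.length + 1 + v.length := by simp; omega
      obtain ⟨j, hji, hjB, hnoA⟩ := h ⟨(u ++ x :: v).length, hiy⟩
        (by simp only [List.get_eq_getElem]; exact hvy.symm ▸ hyA)
      obtain ⟨hix, hvx⟩ := index_of_append heq'
      have hjilt : j.val < (u ++ x :: v).length := hji
      rcases Nat.lt_trichotomy j.val u.length with hlt | heqj | hgt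
      · exact (hnoA ⟨u.length, hix⟩ hlt (by simp only [Fin.mk_lt_mk]; omega)
          (by simp only [List.get_eq_getElem]; exact hvx.symm ▸ hxAB.1))
      · have hgj : σ.get j = x := by
          rw [List.get_eq_getElem]
          have : σ[j.val]'j.isLt = σ[u.length]'hix := by simp only [heqj]
          rw [this]; exact hvx
        exact hxAB.2 (hgj ▸ hjB)
      · have hjmem : σ.get j ∈ v := by
          rw [List.get_eq_getElem]
          have hb : j.val < u.length + 1 + v.length := by omega
          subst heq'
          exact getElem_mem_mid hgt hb j.isLt
        exact (mem_noSym.mp hv _ hjmem) (Set.mem_union_right _ hjB)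
  · intro hn i hiA
    by_contra hnw
    push_neg at hnw
    apply hn
    classical
    set S := (Finset.range i.val).filter
      (fun m => ∃ hm : m < σ.length, σ[m] ∈ A ∪ B) with hS
    rcases S.eq_empty_or_nonempty with hSe | hSne
    · refine Or.inl ⟨σ.take i.val, ?_, _,
        ⟨[σ.get i], ⟨σ.get i, hiA, rfl⟩, σ.drop (i.val+1), trivial, rfl⟩, ?_⟩
      · rw [mem_noSym]
        intro z hz hzB
        obtain ⟨q, hq, hqv⟩ := List.mem_iff_getElem.mp hz
        have hqlt : q < i.val := by
          have := hq; simp only [List.length_take] at this; omega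
        have hqlen : q < σ.length := lt_trans hqlt i.isLt
        have hqS : q ∈ S := by
          rw [hS, Finset.mem_filter, Finset.mem_range]
          refine ⟨hqlt, hqlen, ?_⟩
          have : (σ.take i.val)[q]'hq = σ[q]'hqlen := List.getElem_take
          rw [this] at hqv
          rw [hqv]
          exact Set.mem_union_right _ hzB
        rw [hSe] at hqS
        exact absurd hqS (Finset.notMem_empty q)
      · simpa using eq_take_cons_drop σ i.isLt
    · obtain ⟨m, hmS, hmax0⟩ : ∃ m ∈ S, ∀ k ∈ S, k ≤ m :=
        ⟨S.max' hSne, S.max'_mem hSne, fun k hk => S.le_max' k hk⟩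
      rw [hS, Finset.mem_filter, Finset.mem_range] at hmS
      obtain ⟨hmi, hmlen, hmAB⟩ := hmS
      have hmax : ∀ k, k < i.val → k < σ.length → (∃ hk : k < σ.length, σ[k] ∈ A ∪ B) → k ≤ m := by
        intro k hk1 hk2 hk3
        exact hmax0 k (by rw [hS, Finset.mem_filter, Finset.mem_range]; exact ⟨hk1, hk3⟩)
      have hmnB : σ[m] ∉ B := by
        intro hB
        obtain ⟨k, hk1, hk2, hkA⟩ := hnw ⟨m, hmlen⟩ hmi
          (by simp only [List.get_eq_getElem]; exact hB)
        simp only [List.get_eq_getElem] at hkA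
        have : k.val ≤ m := hmax k.val hk2 k.isLt ⟨k.isLt, Set.mem_union_left _ hkA⟩
        have : m < k.val := hk1
        omega
      have hmA : σ[m] ∈ A := hmAB.resolve_right hmnB
      have h1 : σ = σ.take i.val ++ σ[i.val] :: σ.drop (i.val+1) := eq_take_cons_drop σ i.isLt
      have hmlt : m < (σ.take i.val).length := by simp only [List.length_take]; omega
      have h2 := eq_take_cons_drop (σ.take i.val) hmlt
      have h3 : (σ.take i.val).take m = σ.take m := by rw [List.take_take]; congr 1; omega
      have h4 : (σ.take i.val)[m]'hmlt = σ[m]'hmlen := List.getElem_take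
      rw [h3, h4] at h2
      refine Or.inr ⟨σ.take m, trivial, _,
        ⟨[σ[m]], ⟨σ[m], ⟨hmA, hmnB⟩, rfl⟩, _,
          ⟨(σ.take i.val).drop (m+1), ?_, _,
            ⟨[σ.get i], ⟨σ.get i, hiA, rfl⟩, σ.drop (i.val+1), trivial, rfl⟩, rfl⟩, rfl⟩, ?_⟩
      · rw [mem_noSym]
        intro z hz hzAB
        obtain ⟨q, hq, hqv⟩ := List.mem_iff_getElem.mp hz
        have hql : m + 1 + q < i.val := by
          have := hq
          simp only [List.length_drop, List.length_take] at this
          omega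
        have hqlen : m + 1 + q < σ.length := lt_trans hql i.isLt
        have hv1 : ((σ.take i.val).drop (m+1))[q]'hq = (σ.take i.val)[m+1+q]'(by simp only [List.length_take]; omega) := List.getElem_drop
        have hv2 : (σ.take i.val)[m+1+q]'(by simp only [List.length_take]; omega) = σ[m+1+q]'hqlen := List.getElem_take
        have hzq : z = σ[m+1+q]'hqlen := by rw [← hqv, hv1, hv2]
        have : m + 1 + q ≤ m := hmax _ hql hqlen ⟨hqlen, hzq ▸ hzAB⟩
        omega
      · conv_lhs => rw [h1, h2]
        simp [List.get_eq_getElem]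


section Net

variable {P T : Type}

noncomputable def cntS {T : Type} (S : Set T) (σ : List T) : ℕ :=
  σ.countP (fun t => decide (t ∈ S))

theorem cntS_nil {T : Type} (S : Set T) : cntS S [] = 0 := rfl

theorem cntS_append {T : Type} (S : Set T) (σ₁ σ₂ : List T) :
    cntS S (σ₁ ++ σ₂) = cntS S σ₁ + cntS S σ₂ := by
  simp [cntS, List.countP_append]

theorem cntS_singleton {T : Type} (S : Set T) (t : T) :
    cntS S [t] = if t ∈ S then 1 else 0 := by
  simp [cntS, List.countP_cons]

theorem cntS_cons {T : Type} (S : Set T) (t : T) (σ : List T) :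
    cntS S (t :: σ) = cntS S σ + (if t ∈ S then 1 else 0) := by
  simp [cntS, List.countP_cons]

theorem cntS_eq_zero {T : Type} {S : Set T} {σ : List T} (h : ∀ x ∈ σ, x ∉ S) :
    cntS S σ = 0 := by
  simp only [cntS, List.countP_eq_zero]
  intro a ha
  simpa using h a ha

theorem cntS_pos {T : Type} {S : Set T} {σ : List T} (x : T) (hx : x ∈ σ) (hxS : x ∈ S) :
    0 < cntS S σ := by
  rw [cntS, List.countP_pos_iff]
  exact ⟨x, hx, by simpa using hxS⟩

theorem cntS_pos_elim {T : Type} {S : Set T} {σ : List T} (h : 0 < cntS S σ) :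
    ∃ x ∈ σ, x ∈ S := by
  rw [cntS, List.countP_pos_iff] at h
  obtain ⟨x, hx, hxS⟩ := h
  exact ⟨x, hx, by simpa using hxS⟩

def consS (N : WorkflowNet P T) (p : P) : Set T := {t | N.Fpt p t ∧ ¬ N.Ftp t p}
def prodS (N : WorkflowNet P T) (p : P) : Set T := {t | N.Ftp t p ∧ ¬ N.Fpt p t}

theorem markEq {N : WorkflowNet P T} {M M' : P → ℕ} {σ : List T}
    (h : FiresSeq N M σ M') (p : P) :
    M' p + cntS (consS N p) σ = M p + cntS (prodS N p) σ := by
  induction h with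
  | nil M1 => rfl
  | @cons M1 M2 M3 t τ hf hfs ih =>
      obtain ⟨hen, hupd⟩ := hf
      obtain ⟨h1, h2, h3⟩ := hupd p
      rw [cntS_cons, cntS_cons]
      by_cases hc : N.Fpt p t ∧ ¬ N.Ftp t p
      · have hMp : 0 < M1 p := hen p hc.1
        have e1 := h1 hc
        have hmc : t ∈ consS N p := hc
        have hmp : t ∉ prodS N p := fun hp => hp.2 hc.1
        rw [if_pos hmc, if_neg hmp]
        omega
      · by_cases hp : N.Ftp t p ∧ ¬ N.Fpt p t
        · have e2 := h2 hp
          have hmc : t ∉ consS N p := hc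
          have hmp : t ∈ prodS N p := hp
          rw [if_neg hmc, if_pos hmp]
          omega
        · have e3 := h3 hc hp
          have hmc : t ∉ consS N p := hc
          have hmp : t ∉ prodS N p := hp
          rw [if_neg hmc, if_neg hmp]
          omega

theorem firesSeq_append {N : WorkflowNet P T} {M M₂ : P → ℕ} {l₁ l₂ : List T}
    (h : FiresSeq N M (l₁ ++ l₂) M₂) : ∃ Mm, FiresSeq N M l₁ Mm ∧ FiresSeq N Mm l₂ M₂ := by
  induction l₁ generalizing M with
  | nil => exact ⟨M, FiresSeq.nil M, h⟩
  | cons t l ih =>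
      cases h with
      | cons hf hfs =>
          obtain ⟨Mm, h1, h2⟩ := ih hfs
          exact ⟨Mm, FiresSeq.cons hf h1, h2⟩

theorem firesSeq_snoc {N : WorkflowNet P T} {M Mm M' : P → ℕ} {l : List T} {t : T}
    (h : FiresSeq N M l Mm) (hf : Fires N Mm t M') : FiresSeq N M (l ++ [t]) M' := by
  induction h with
  | nil M1 => exact FiresSeq.cons hf (FiresSeq.nil _)
  | cons hf1 hfs ih => exact FiresSeq.cons hf1 (ih hf)

theorem fires_exists {N : WorkflowNet P T} {M : P → ℕ} {t : T} (h : Enables N M t) :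
    ∃ M', Fires N M t M' := by
  classical
  refine ⟨fun q => if N.Fpt q t ∧ ¬ N.Ftp t q then M q - 1
                   else if N.Ftp t q ∧ ¬ N.Fpt q t then M q + 1 else M q, h, ?_⟩
  intro q
  refine ⟨fun hc => ?_, fun hp => ?_, fun hnc hnp => ?_⟩
  · simp only [if_pos hc]
  · show (if N.Fpt q t ∧ ¬ N.Ftp t q then M q - 1
      else if N.Ftp t q ∧ ¬ N.Fpt q t then M q + 1 else M q) = M q + 1
    rw [if_neg (fun hc : N.Fpt q t ∧ ¬ N.Ftp t q => hp.2 hc.1), if_pos hp]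
  · show (if N.Fpt q t ∧ ¬ N.Ftp t q then M q - 1
      else if N.Ftp t q ∧ ¬ N.Fpt q t then M q + 1 else M q) = M q
    rw [if_neg hnc, if_neg hnp]

theorem preset_empty_iff {N : WorkflowNet P T} {p : P} :
    preset N p = ∅ ↔ ∀ t, ¬ N.Ftp t p := by
  rw [Set.eq_empty_iff_forall_notMem]
  exact Iff.rfl

theorem postset_empty_iff {N : WorkflowNet P T} {p : P} :
    postset N p = ∅ ↔ ∀ t, ¬ N.Fpt p t := by
  rw [Set.eq_empty_iff_forall_notMem]
  exact Iff.rfl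

theorem trans_preset_nonempty (N : WorkflowNet P T) (t : T) : ∃ p, N.Fpt p t := by
  have h := (N.on_path (Sum.inr t)).1
  rcases Relation.ReflTransGen.cases_tail h with he | ⟨c, -, hedge⟩
  · exact absurd he (by simp)
  · cases c with
    | inl p => exact ⟨p, hedge⟩
    | inr t' => simp [NetEdge] at hedge

theorem cnt_take_succ {T : Type} (S : Set T) (σ : List T) {n : ℕ} (hn : n < σ.length) :
    cntS S (σ.take (n+1)) = cntS S (σ.take n) + (if σ[n] ∈ S then 1 else 0) := by
  rw [List.take_succ, List.getElem?_eq_getElem hn]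
  rw [cntS_append]
  simp [cntS_singleton]

theorem key_altprec {T : Type} {B A : Set T} {σ : List T} (h : AltPrecC B A σ) :
    ∀ n, n ≤ σ.length →
      (cntS (A \ B) (σ.take n) ≤ cntS (B \ A) (σ.take n) ∧
       ∀ hn : n < σ.length, σ[n] ∈ A →
         cntS (A \ B) (σ.take n) + 1 ≤ cntS (B \ A) (σ.take n)) := by
  intro n
  induction n using Nat.strong_induction_on with
  | _ n ih =>
    intro hnlen
    constructor
    · cases n with
      | zero => simp [cntS_nil]
      | succ m =>
          have hm : m < σ.length := by omega
          have ihm := ih m (by omega) (by omega)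
          rw [cnt_take_succ _ _ hm, cnt_take_succ _ _ hm]
          by_cases hA : σ[m] ∈ A \ B
          · have h2 := ihm.2 hm hA.1
            rw [if_pos hA, if_neg (fun hx : σ[m] ∈ B \ A => hx.2 hA.1)]
            omega
          · have h1 := ihm.1
            rw [if_neg hA]
            split_ifs <;> omega
    · intro hn hA
      obtain ⟨j, hji, hjB, hnoA⟩ := h ⟨n, hn⟩ (by simpa using hA)
      have hjlt : j.val < n := hji
      have hjlen : j.val < σ.length := j.isLt
      have hstep : ∀ m, j.val + 1 ≤ m → m ≤ n →
          cntS (A \ B) (σ.take m) = cntS (A \ B) (σ.take (j.val+1)) ∧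
          cntS (B \ A) (σ.take (j.val+1)) ≤ cntS (B \ A) (σ.take m) := by
        intro m hm1
        induction m, hm1 using Nat.le_induction with
        | base => intro _; exact ⟨rfl, le_refl _⟩
        | succ m hm ihm =>
            intro hm2
            have hmlen : m < σ.length := by omega
            have ihm' := ihm (by omega)
            have hnA : σ[m] ∉ A := by
              have := hnoA ⟨m, hmlen⟩ (by simp [Fin.lt_def]; omega) (by simp [Fin.lt_def]; omega)
              simpa using this
            rw [cnt_take_succ _ _ hmlen, cnt_take_succ _ _ hmlen]
            refine ⟨?_, ?_⟩
            · rw [if_neg (fun hx : σ[m] ∈ A \ B => hnA hx.1)]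
              omega
            · have := ihm'.2
              split_ifs <;> omega
      have hfin := hstep n (by omega) (le_refl n)
      have hstep_j := cnt_take_succ (A \ B) σ hjlen
      have hstep_j2 := cnt_take_succ (B \ A) σ hjlen
      have hjB' : σ[j.val] ∈ B := by simpa using hjB
      by_cases hjA : σ[j.val] ∈ A
      · have ihj := (ih j.val (by omega) (by omega)).2 hjlen hjA
        rw [if_neg (fun hx : σ[j.val] ∈ A \ B => hx.2 hjB')] at hstep_j
        rw [if_neg (fun hx : σ[j.val] ∈ B \ A => hx.2 hjA)] at hstep_j2
        omega
      · have ihj := (ih j.val (by omega) (by omega)).1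
        rw [if_neg (fun hx : σ[j.val] ∈ A \ B => hjA hx.1)] at hstep_j
        rw [if_pos (show σ[j.val] ∈ B \ A from ⟨hjB', hjA⟩)] at hstep_j2
        omega

end Net


section Main

variable {P T : Type}

theorem preset_source_empty (N : WorkflowNet P T) : preset N N.source = ∅ :=
  preset_empty_iff.mpr N.source_pre_empty

theorem postset_sink_empty (N : WorkflowNet P T) : postset N N.sink = ∅ :=
  postset_empty_iff.mpr N.sink_post_empty

theorem eq_source_of_preset_empty {N : WorkflowNet P T} {p : P} (h : preset N p = ∅) :
    p = N.source := N.source_unique p (preset_empty_iff.mp h)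

theorem eq_sink_of_postset_empty {N : WorkflowNet P T} {p : P} (h : postset N p = ∅) :
    p = N.sink := N.sink_unique p (postset_empty_iff.mp h)

theorem preset_sink_ne {N : WorkflowNet P T} (hne : N.source ≠ N.sink) :
    preset N N.sink ≠ ∅ := fun h => hne (eq_source_of_preset_empty h).symm

theorem model_to_run {N : WorkflowNet P T} (hsound : Sound N)
    (hne : N.source ≠ N.sink) {σ : List T} (hmt : ModelTrace N σ) : IsRun N σ := by
  have hbuild : ∀ n, n ≤ σ.length → ∃ M, FiresSeq N (initialMarking N) (σ.take n) M := by
    intro n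
    induction n with
    | zero => exact fun _ => ⟨initialMarking N, by simpa using FiresSeq.nil _⟩
    | succ m ih =>
        intro hm1
        have hmlen : m < σ.length := by omega
        obtain ⟨M, hM⟩ := ih (by omega)
        have hen : Enables N M σ[m] := by
          intro p hpt
          have hmark := markEq hM p
          by_cases hpre : preset N p = ∅
          · have hps := eq_source_of_preset_empty hpre
            have hcon := hmt p
            simp only [PlaceConstraint, if_pos hpre] at hcon
            have hc0 : cntS (consS N p) (σ.take m) = 0 := by
              apply cntS_eq_zero
              intro x hx hxc
              obtain ⟨q, hq, hqv⟩ := List.mem_iff_getElem.mp hx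
              have hqm : q < m := by simp only [List.length_take] at hq; omega
              have hqlen : q < σ.length := by omega
              have hxq : (σ.take m)[q]'hq = σ[q]'hqlen := List.getElem_take
              have hxA : σ[q] ∈ postset N p := by
                rw [← hxq, hqv]; exact hxc.1
              have heqf := hcon ⟨q, hqlen⟩ ⟨m, hmlen⟩ (by simpa using hxA) (by simpa using (show σ[m] ∈ postset N p from hpt))
              have := congrArg Fin.val heqf
              simp only [] at this
              omega
            have hp0 : cntS (prodS N p) (σ.take m) = 0 := by
              apply cntS_eq_zero
              intro x hx hxp
              have hxm : x ∈ preset N p := hxp.1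
              rw [hpre] at hxm; exact hxm
            have hi1 : initialMarking N p = 1 := by simp [initialMarking, hps]
            rw [hc0, hp0, hi1] at hmark
            omega
          · have hpost : postset N p ≠ ∅ := by
              intro h0; rw [Set.eq_empty_iff_forall_notMem] at h0; exact h0 σ[m] hpt
            have hcon := hmt p
            simp only [PlaceConstraint, if_neg hpre, if_neg hpost] at hcon
            have hkey := (key_altprec hcon m (by omega)).2 hmlen hpt
            have hce : consS N p = postset N p \ preset N p := rfl
            have hpe : prodS N p = preset N p \ postset N p := rfl
            rw [hce, hpe] at hmark
            have hps : p ≠ N.source := by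
              intro h0; rw [h0] at hpre; exact hpre (preset_source_empty N)
            simp only [initialMarking, if_neg hps] at hmark
            omega
        obtain ⟨M', hM'⟩ := fires_exists hen
        refine ⟨M', ?_⟩
        have hts : σ.take (m+1) = σ.take m ++ [σ[m]] := by
          rw [List.take_succ, List.getElem?_eq_getElem hmlen]; rfl
        rw [hts]
        exact firesSeq_snoc hM hM'
  obtain ⟨M, hM⟩ := hbuild σ.length (le_refl _)
  rw [List.take_length] at hM
  have hcon := hmt N.sink
  have hpre : preset N N.sink ≠ ∅ := preset_sink_ne hne
  have hpost : postset N N.sink = ∅ := postset_sink_empty N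
  simp only [PlaceConstraint, if_neg hpre, if_pos hpost] at hcon
  obtain ⟨a, haB, hlast⟩ := hcon
  have hmark := markEq hM N.sink
  have hc0 : cntS (consS N N.sink) σ = 0 :=
    cntS_eq_zero (fun x _ hxc => N.sink_post_empty x hxc.1)
  have hne2 : σ ≠ [] := by rintro rfl; simp at hlast
  have hgl : σ.getLast hne2 = a := by
    rw [List.getLast?_eq_getLast hne2] at hlast; exact Option.some.inj hlast
  have hmem : a ∈ σ := hgl ▸ List.getLast_mem hne2
  have hpos : 0 < cntS (prodS N N.sink) σ :=
    cntS_pos a hmem ⟨haB, fun hc => N.sink_post_empty a hc⟩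
  have hsne : N.sink ≠ N.source := fun h => hne h.symm
  rw [hc0] at hmark
  simp only [initialMarking, if_neg hsne] at hmark
  have hMs : 0 < M N.sink := by omega
  have hfin := hsound.2.1 M ⟨σ, hM⟩ hMs
  show FiresSeq N (initialMarking N) σ (finalMarking N)
  rw [← hfin]; exact hM


theorem drop_split_take {α : Type} (σ : List α) {a b : ℕ} (hab : a + 1 ≤ b)
    (hb : b ≤ σ.length) :
    σ.drop (a+1) = (σ.take b).drop (a+1) ++ σ.drop b := by
  conv_lhs => rw [← List.take_append_drop b σ]
  rw [List.drop_append]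
  have h0 : a + 1 - (σ.take b).length = 0 := by
    simp only [List.length_take]; omega
  rw [h0, List.drop_zero]

theorem run_split {N : WorkflowNet P T} {σ : List T} (hrun : IsRun N σ) {i : ℕ}
    (hi : i < σ.length) :
    ∃ Mi Mi', FiresSeq N (initialMarking N) (σ.take i) Mi ∧ Fires N Mi σ[i] Mi' ∧
      FiresSeq N Mi' (σ.drop (i+1)) (finalMarking N) := by
  have hd : σ = σ.take i ++ σ[i] :: σ.drop (i+1) := eq_take_cons_drop σ hi
  have h : FiresSeq N (initialMarking N) (σ.take i ++ σ[i] :: σ.drop (i+1)) (finalMarking N) := by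
    rw [← hd]; exact hrun
  obtain ⟨Mi, h1, h2⟩ := firesSeq_append h
  cases h2 with
  | cons hf hfs => exact ⟨Mi, _, h1, hf, hfs⟩

theorem run_to_model {N : WorkflowNet P T} (hsafe : Safe N) (hsound : Sound N)
    (hne : N.source ≠ N.sink) {σ : List T} (hrun : IsRun N σ) : ModelTrace N σ := by
  intro p
  by_cases hpre : preset N p = ∅
  · simp only [PlaceConstraint, if_pos hpre]
    have haux : ∀ (a b : Fin σ.length), a.val < b.val → σ[a.val] ∈ postset N p →
        σ[b.val] ∈ postset N p → False := by
      intro a b hab haA hbA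
      obtain ⟨Mb, Mb', h1, hf, -⟩ := run_split hrun b.isLt
      have hen : 0 < Mb p := hf.1 p hbA
      have hmark := markEq h1 p
      have hp0 : cntS (prodS N p) (σ.take b.val) = 0 := by
        apply cntS_eq_zero
        intro x _ hxp
        have hxm : x ∈ preset N p := hxp.1
        rw [hpre] at hxm; exact hxm
      have hnpre : ∀ z : T, ¬ N.Ftp z p := preset_empty_iff.mp hpre
      have hmemt : σ[a.val] ∈ σ.take b.val := by
        have he : (σ.take b.val)[a.val]'(by simp only [List.length_take]; omega) = σ[a.val] :=
          List.getElem_take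
        rw [← he]; exact List.getElem_mem _
      have hcpos : 0 < cntS (consS N p) (σ.take b.val) :=
        cntS_pos (σ[a.val]) hmemt ⟨haA, hnpre _⟩
      have hil : initialMarking N p ≤ 1 := by
        simp only [initialMarking]; split_ifs <;> omega
      omega
    intro i j hiA hjA
    simp only [List.get_eq_getElem] at hiA hjA
    rcases Nat.lt_trichotomy i.val j.val with h|h|h
    · exact (haux i j h hiA hjA).elim
    · exact Fin.ext h
    · exact (haux j i h hjA hiA).elim
  · by_cases hpost : postset N p = ∅
    · simp only [PlaceConstraint, if_neg hpre, if_pos hpost]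
      have hps := eq_sink_of_postset_empty hpost
      subst hps
      have hsne : N.sink ≠ N.source := fun h => hne h.symm
      have hne0 : σ ≠ [] := by
        rintro rfl
        have hm := markEq hrun N.source
        simp [cntS_nil, initialMarking, finalMarking, if_neg hne] at hm
      have hlastpos : ∀ (i : ℕ) (hi : i < σ.length), σ[i] ∈ preset N N.sink →
          i = σ.length - 1 := by
        intro i hi hiB
        by_contra hlt
        have hi1 : i + 1 < σ.length := by omega
        obtain ⟨M1, M1', h1, hf, -⟩ := run_split hrun hi1
        have hmark := markEq h1 N.sink
        have hc0 : cntS (consS N N.sink) (σ.take (i+1)) = 0 :=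
          cntS_eq_zero (fun x _ hxc => absurd hxc.1 (N.sink_post_empty x))
        have hmemt : σ[i] ∈ σ.take (i+1) := by
          have he : (σ.take (i+1))[i]'(by simp only [List.length_take]; omega) = σ[i] :=
            List.getElem_take
          rw [← he]; exact List.getElem_mem _
        have hppos : 0 < cntS (prodS N N.sink) (σ.take (i+1)) :=
          cntS_pos σ[i] hmemt ⟨hiB, fun hc => N.sink_post_empty _ hc⟩
        simp only [initialMarking, if_neg hsne] at hmark
        have hM1 : 0 < M1 N.sink := by omega
        have hfin := hsound.2.1 M1 ⟨_, h1⟩ hM1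
        obtain ⟨q, hq⟩ := trans_preset_nonempty N (σ[i+1])
        have henq := hf.1 q hq
        rw [hfin] at henq
        simp only [finalMarking] at henq
        by_cases hqs : q = N.sink
        · rw [hqs] at hq; exact N.sink_post_empty _ hq
        · rw [if_neg hqs] at henq; omega
      have hl1 : σ.length - 1 < σ.length := by
        have : 0 < σ.length := List.length_pos_iff.mpr hne0
        omega
      have hmark := markEq hrun N.sink
      have hc0 : cntS (consS N N.sink) σ = 0 :=
        cntS_eq_zero (fun x _ hxc => absurd hxc.1 (N.sink_post_empty x))
      have hf1 : finalMarking N N.sink = 1 := by simp [finalMarking]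
      have hi0 : initialMarking N N.sink = 0 := by
        simp only [initialMarking]; rw [if_neg hsne]
      rw [hc0, hf1, hi0] at hmark
      have hpos : 0 < cntS (prodS N N.sink) σ := by omega
      obtain ⟨x, hx, hxS⟩ := cntS_pos_elim hpos
      obtain ⟨q, hq, hqv⟩ := List.mem_iff_getElem.mp hx
      have hqB : σ[q] ∈ preset N N.sink := by rw [hqv]; exact hxS.1
      have hqe := hlastpos q hq hqB
      simp only [hqe] at hqB
      refine ⟨σ[σ.length - 1], hqB, ?_⟩
      rw [List.getLast?_eq_getElem?, List.getElem?_eq_getElem hl1]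
    · simp only [PlaceConstraint, if_neg hpre, if_neg hpost]
      intro i hiA
      simp only [List.get_eq_getElem] at hiA
      have hps : p ≠ N.source := fun h0 => hpre (h0 ▸ preset_source_empty N)
      obtain ⟨Mi, Mi', h1, hf, -⟩ := run_split hrun i.isLt
      have hen : 0 < Mi p := hf.1 p hiA
      have hmark := markEq h1 p
      have hi0 : initialMarking N p = 0 := by
        simp only [initialMarking]; rw [if_neg hps]
      rw [hi0] at hmark
      have hppos : 0 < cntS (prodS N p) (σ.take i.val) := by omega
      obtain ⟨x, hx, hxS⟩ := cntS_pos_elim hppos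
      obtain ⟨q0, hq0, hq0v⟩ := List.mem_iff_getElem.mp hx
      have hq0i : q0 < i.val := by simp only [List.length_take] at hq0; omega
      have hq0len : q0 < σ.length := lt_trans hq0i i.isLt
      have hq0B : σ[q0] ∈ preset N p := by
        have he : (σ.take i.val)[q0]'hq0 = σ[q0]'hq0len := List.getElem_take
        rw [← he, hq0v]; exact hxS.1
      classical
      set S := (Finset.range i.val).filter
        (fun m => ∃ hm : m < σ.length, σ[m] ∈ preset N p) with hS
      have hSne : S.Nonempty := ⟨q0, by
        rw [hS, Finset.mem_filter, Finset.mem_range]; exact ⟨hq0i, hq0len, hq0B⟩⟩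
      obtain ⟨jm, hjmS, hjmax0⟩ : ∃ jm ∈ S, ∀ k ∈ S, k ≤ jm :=
        ⟨S.max' hSne, S.max'_mem hSne, fun k hk => S.le_max' k hk⟩
      rw [hS, Finset.mem_filter, Finset.mem_range] at hjmS
      obtain ⟨hjmi, hjmlen, hjmB⟩ := hjmS
      have hjmax : ∀ k, k < i.val → ∀ hk : k < σ.length, σ[k] ∈ preset N p → k ≤ jm :=
        fun k hk1 hk2 hk3 =>
          hjmax0 k (by rw [hS, Finset.mem_filter, Finset.mem_range]; exact ⟨hk1, hk2, hk3⟩)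
      refine ⟨⟨jm, hjmlen⟩, ?_, by simpa using hjmB, ?_⟩
      · simp only [Fin.lt_def]; exact hjmi
      · intro k hjk hki hkA
        simp only [List.get_eq_getElem] at hkA
        have hjmk : jm < k.val := hjk
        have hkilt : k.val < i.val := hki
        have hkB : σ[k.val] ∉ preset N p := by
          intro hB
          have := hjmax k.val hkilt k.isLt hB
          omega
        have hkC : σ[k.val] ∈ consS N p := ⟨hkA, hkB⟩
        obtain ⟨Mk, Mk', h2, hfk, hafter⟩ := run_split hrun k.isLt
        have hsafe_k : Mk p ≤ 1 := hsafe Mk ⟨_, h2⟩ p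
        have henk : 0 < Mk p := hfk.1 p hkA
        have hkupd : Mk' p = Mk p - 1 := (hfk.2 p).1 hkC
        have hmid : σ.drop (k.val+1) = (σ.take i.val).drop (k.val+1) ++ σ.drop i.val :=
          drop_split_take σ (by omega) (le_of_lt i.isLt)
        rw [hmid] at hafter
        obtain ⟨Mi2, h3, h4⟩ := firesSeq_append hafter
        have hdropi : σ.drop i.val = σ[i.val] :: σ.drop (i.val+1) :=
          List.drop_eq_getElem_cons i.isLt
        rw [hdropi] at h4
        have hen2 : 0 < Mi2 p := by
          cases h4 with
          | cons hg _ => exact hg.1 p hiA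
        have hmark2 := markEq h3 p
        have hp02 : cntS (prodS N p) ((σ.take i.val).drop (k.val+1)) = 0 := by
          apply cntS_eq_zero
          intro z hz hzp
          obtain ⟨q, hq, hqv⟩ := List.mem_iff_getElem.mp hz
          have hlen2 : k.val + 1 + q < i.val := by
            simp only [List.length_drop, List.length_take] at hq; omega
          have hql : k.val + 1 + q < σ.length := lt_trans hlen2 i.isLt
          have hv1 : ((σ.take i.val).drop (k.val+1))[q]'hq =
              (σ.take i.val)[k.val+1+q]'(by simp only [List.length_take]; omega) :=
            List.getElem_drop
          have hv2 : (σ.take i.val)[k.val+1+q]'(by simp only [List.length_take]; omega) =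
              σ[k.val+1+q]'hql := List.getElem_take
          have hzB : σ[k.val+1+q] ∈ preset N p := by rw [← hv2, ← hv1, hqv]; exact hzp.1
          have := hjmax (k.val+1+q) hlen2 hql hzB
          omega
        rw [hp02] at hmark2
        omega

end Main


end SFX

/-- Theorem 2: the language of runs of a safe and sound workflow net
(with `▶ ≠ ■`) is a star-free regular language over its transitions. -/
theorem runs_starFree {P T : Type} [Finite P] [Finite T]
    (N : WorkflowNet P T) (hsafe : Safe N) (hsound : Sound N)
    (hne : N.source ≠ N.sink) :
    StarFree {σ : List T | IsRun N σ} := by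
  have heq : {σ : List T | IsRun N σ} = ⋂ p : P, {σ : List T | PlaceConstraint N p σ} := by
    ext σ
    simp only [Set.mem_setOf_eq, Set.mem_iInter]
    exact ⟨fun h p => SFX.run_to_model hsafe hsound hne h p,
           fun h => SFX.model_to_run hsound hne h⟩
  rw [heq]
  apply SFX.sf_iInter
  intro p
  by_cases hpre : preset N p = ∅
  · have h1 : {σ : List T | PlaceConstraint N p σ} =
        {σ : List T | AtMostOneC (postset N p) σ} := by
      simp only [PlaceConstraint, if_pos hpre]
    rw [h1, SFX.amo_eq]
    exact SFX.sf_langAMO _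
  · by_cases hpost : postset N p = ∅
    · have h1 : {σ : List T | PlaceConstraint N p σ} =
          {σ : List T | EndC (preset N p) σ} := by
        simp only [PlaceConstraint, if_neg hpre, if_pos hpost]
      rw [h1, SFX.end_eq]
      exact SFX.sf_langEnd _
    · have h1 : {σ : List T | PlaceConstraint N p σ} =
          {σ : List T | AltPrecC (preset N p) (postset N p) σ} := by
        simp only [PlaceConstraint, if_neg hpre, if_neg hpost]
      rw [h1, SFX.ap_eq]
      exact SFX.sf_langAP _ _
end

section
/- Let WN = (P, T, F) be a safe and sound workflow net and let p ∈ P be a place with both •p and p• nonempty. Then every firing sequence σ = ⟨t₁, …, tₙ⟩ of WN satisfies the constraint AlternatePrecedence(•p, p•): for every index i with tᵢ ∈ p• there is an index j < i with tⱼ ∈ •p and tₖ ∉ p• for all k with j < k < i. -/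
open Classical

variable {P T : Type}

private lemma firesSeq_snoc_s11 {P T : Type} {N : WorkflowNet P T} :
    ∀ {σ : List T} {M0 M2 : P → ℕ} {t : T},
    FiresSeq N M0 (σ ++ [t]) M2 → ∃ M1, FiresSeq N M0 σ M1 ∧ Fires N M1 t M2 := by
  intro σ
  induction σ with
  | nil =>
    intro M0 M2 t h
    cases h with
    | cons hf hs => cases hs; exact ⟨_, FiresSeq.nil _, hf⟩
  | cons a σ ih =>
    intro M0 M2 t h
    cases h with
    | cons hf hs =>
      obtain ⟨M1, h1, h2⟩ := ih hs
      exact ⟨M1, FiresSeq.cons hf h1, h2⟩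

private lemma key_invariant {P T : Type} (N : WorkflowNet P T)
    (hsafe : Safe N) (p : P) (hpsrc : p ≠ N.source) :
    ∀ σ M, FiresSeq N (initialMarking N) σ M →
      AltPrecC (preset N p) (postset N p) σ ∧
      (0 < M p → ∃ j : Fin σ.length, σ.get j ∈ preset N p ∧
        ∀ k : Fin σ.length, j < k → σ.get k ∉ postset N p) := by
  intro σ
  induction σ using List.reverseRecOn with
  | nil =>
    intro M h
    cases h
    constructor
    · intro i; exact absurd i.isLt (by simp)
    · intro h0; simp [initialMarking, hpsrc] at h0
  | append_singleton σ t ih =>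
    intro M2 h
    obtain ⟨M1, h1, hf⟩ := firesSeq_snoc_s11 h
    obtain ⟨hAlt, hInv⟩ := ih M1 h1
    have hM1le : M1 p ≤ 1 := hsafe M1 ⟨σ, h1⟩ p
    have hlen : (σ ++ [t]).length = σ.length + 1 := by simp
    -- helper equalities for get
    have hget_lt : ∀ (i : Fin (σ ++ [t]).length) (hi : i.val < σ.length),
        (σ ++ [t]).get i = σ.get ⟨i.val, hi⟩ := by
      intro i hi
      simp [List.get_eq_getElem, List.getElem_append_left hi]
    have hget_last : ∀ (i : Fin (σ ++ [t]).length) (hi : i.val = σ.length),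
        (σ ++ [t]).get i = t := by
      intro i hi
      simp [List.get_eq_getElem, hi]
    constructor
    · -- AltPrecC for σ ++ [t]
      intro i hi
      rcases lt_or_eq_of_le (Nat.lt_succ_iff.mp (by simpa using i.isLt)) with hi' | hi'
      · -- i falls in σ
        rw [hget_lt i hi'] at hi
        obtain ⟨j, hj1, hj2, hj3⟩ := hAlt ⟨i.val, hi'⟩ hi
        refine ⟨⟨j.val, by omega⟩, ?_, ?_, ?_⟩
        · exact hj1
        · rw [hget_lt ⟨j.val, by omega⟩ j.isLt]; exact hj2
        · intro k hk1 hk2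
          have hk' : k.val < σ.length := lt_trans hk2 hi'
          rw [hget_lt k hk']
          exact hj3 ⟨k.val, hk'⟩ hk1 hk2
      · -- i is the last position, carrying t ∈ p•
        rw [hget_last i hi'] at hi
        have henabled : 0 < M1 p := hf.1 p hi
        obtain ⟨j, hj1, hj2⟩ := hInv henabled
        refine ⟨⟨j.val, by omega⟩, ?_, ?_, ?_⟩
        · show j.val < i.val; omega
        · rw [hget_lt ⟨j.val, by omega⟩ j.isLt]; exact hj1
        · intro k hk1 hk2
          have hk' : k.val < σ.length := by
            have := hk2; simp [Fin.lt_def, hi'] at this ⊢; omega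
          rw [hget_lt k hk']
          exact hj2 ⟨k.val, hk'⟩ hk1
    · -- the invariant for M2
      intro h2
      by_cases htpre : N.Ftp t p
      · refine ⟨⟨σ.length, by omega⟩, ?_, ?_⟩
        · rw [hget_last ⟨σ.length, by omega⟩ rfl]; exact htpre
        · intro k hk _
          have : k.val < σ.length + 1 := by simpa using k.isLt
          have : σ.length < k.val := hk
          omega
      · by_cases htpost : N.Fpt p t
        · -- t consumes the unique token; M2 p = M1 p - 1 = 0, contradiction
          have := ((hf.2 p).1 ⟨htpost, htpre⟩)
          omega
        · -- t untouched: M2 p = M1 p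
          have hM2 : M2 p = M1 p := (hf.2 p).2.2 (fun hc => htpost hc.1)
            (fun hc => htpre hc.1)
          obtain ⟨j, hj1, hj2⟩ := hInv (hM2 ▸ h2)
          refine ⟨⟨j.val, by omega⟩, ?_, ?_⟩
          · rw [hget_lt ⟨j.val, by omega⟩ j.isLt]; exact hj1
          · intro k hk
            rcases lt_or_eq_of_le (Nat.lt_succ_iff.mp (by simpa using k.isLt)) with hk' | hk'
            · rw [hget_lt k hk']
              exact hj2 ⟨k.val, hk'⟩ hk
            · rw [hget_last k hk']
              exact htpost

/-- In a safe and sound workflow net, for every place `p` with both `•p` and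
`p•` nonempty, every firing sequence satisfies
`AlternatePrecedence(•p, p•)`. -/
theorem firingSequence_altPrec {P T : Type} [Finite P] [Finite T]
    (N : WorkflowNet P T) (hsafe : Safe N) (hsound : Sound N)
    (p : P) (hpre : preset N p ≠ ∅) (hpost : postset N p ≠ ∅) :
    ∀ σ : List T, FiringSequence N σ →
      AltPrecC (preset N p) (postset N p) σ := by
  have hpsrc : p ≠ N.source := by
    intro hps
    obtain ⟨t, ht⟩ := Set.nonempty_iff_ne_empty.mpr hpre
    exact N.source_pre_empty t (hps ▸ ht)
  rintro σ ⟨M, hM⟩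
  exact (key_invariant N hsafe p hpsrc σ M hM).1
end

section
/- Let WN = (P, T, F) be a workflow net. Then every nonempty finite trace over T that satisfies all constraints of the Declare specification DS(WN) begins with a transition of ▶•, the postset of the initial place. (Indeed, every transition not in ▶• has an input place p ≠ ▶ with •p ≠ ∅, hence occurs in the consequent parameter of some AlternatePrecedence constraint of DS(WN), so it cannot occur first.) -/
open Classical

variable {P T : Type}

/-- In any workflow net, every nonempty trace satisfying all constraints of
the synthesized Declare specification begins with a transition of `▶•`. -/
theorem model_trace_starts_in_source_postset {P T : Type} [Finite P] [Finite T]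
    (N : WorkflowNet P T) :
    ∀ (t : T) (σ : List T), ModelTrace N (t :: σ) →
      t ∈ postset N N.source := by

  intro t σ h
  -- t has some input place
  obtain ⟨hpath, -⟩ := N.on_path (Sum.inr t)
  have hne : (Sum.inr t : P ⊕ T) ≠ Sum.inl N.source := by simp
  obtain ⟨b, -, hedge⟩ := (Relation.ReflTransGen.cases_tail hpath).resolve_left hne
  obtain (p | t') := b
  · -- edge from place p to transition t, so Fpt p t
    have hpt : N.Fpt p t := hedge
    by_cases hp : p = N.source
    · subst hp; exact hpt
    · -- p ≠ source, so preset p nonempty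
      exfalso
      have hpre : preset N p ≠ ∅ := by
        intro he
        apply hp
        apply N.source_unique
        intro t' ht'
        have : t' ∈ preset N p := ht'
        rw [he] at this
        exact this
      have hpost : postset N p ≠ ∅ := by
        intro he
        have : t ∈ postset N p := hpt
        rw [he] at this
        exact this
      have hc := h p
      unfold PlaceConstraint at hc
      rw [if_neg hpre, if_neg hpost] at hc
      have h0 : (0 : ℕ) < (t :: σ).length := by simp
      obtain ⟨j, hj, -, -⟩ := hc ⟨0, h0⟩ hpt
      exact absurd hj (by simp [Fin.lt_def])
  · exact (hedge : False).elim
end
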